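/- arXiv:1509.03907 — 8 statements merged into one kernel-verified Lean document; each statement's English description precedes it below -/
import Mathlib

section
/- Let n ≥ 2 and let F = L_{v_n} ∘ ⋯ ∘ L_{v_1} be the SDS map over the complete graph K_n with identity update order, where every vertex uses the same vertex function f : 𝔽₂ⁿ → 𝔽₂ (the local update function L_{v_i} replaces the i-th coordinate of the system state with f applied to the current full system state). If x ∈ 𝔽₂ⁿ satisfies F(F(x)) = x and F(x) ≠ x, then F(x) = inv(x), where inv flips every coordinate (adds 1 to each coordinate in 𝔽₂). -/
/-- The SDS map over the complete graph `K n` with identity update order and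
common vertex function `f`: vertices `0, 1, …, n-1` are updated in order,
each update replacing that coordinate with `f` of the current system state. -/
def sdsMap {n : ℕ} (f : (Fin n → ZMod 2) → ZMod 2) (x : Fin n → ZMod 2) :
    Fin n → ZMod 2 :=
  (List.finRange n).foldl (fun v i => Function.update v i (f v)) x

/-- `z` contains `101` as a subsequence. -/
def contains101 {n : ℕ} (z : Fin n → ZMod 2) : Prop :=
  ∃ i j k : Fin n, i < j ∧ j < k ∧ z i = 1 ∧ z j = 0 ∧ z k = 1

/-- `z` contains `111` as a subsequence. -/
def contains111 {n : ℕ} (z : Fin n → ZMod 2) : Prop :=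
  ∃ i j k : Fin n, i < j ∧ j < k ∧ z i = 1 ∧ z j = 1 ∧ z k = 1

/-- The number of 2-cycles in the phase space of `sdsMap f`. -/
noncomputable def numTwoCycles {n : ℕ} (f : (Fin n → ZMod 2) → ZMod 2) : ℕ :=
  Set.ncard {p : Sym2 (Fin n → ZMod 2) |
    ∃ x y, p = s(x, y) ∧ x ≠ y ∧ sdsMap f x = y ∧ sdsMap f y = x}

namespace SDSAux

variable {n : ℕ} (f : (Fin n → ZMod 2) → ZMod 2)

def mix (a b : Fin n → ZMod 2) (m : ℕ) : Fin n → ZMod 2 :=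
  fun i => if i.val < m then b i else a i

def Pm (a : Fin n → ZMod 2) (m : ℕ) : Fin n → ZMod 2 :=
  ((List.finRange n).take m).foldl (fun v i => Function.update v i (f v)) a

lemma Pm_top (a : Fin n → ZMod 2) : Pm f a n = sdsMap f a := by
  unfold Pm sdsMap
  rw [List.take_of_length_le (by simp)]

lemma Pm_succ (a : Fin n → ZMod 2) (m : ℕ) (hm : m < n) :
    Pm f a (m+1) = Function.update (Pm f a m) ⟨m, hm⟩ (f (Pm f a m)) := by
  unfold Pm
  rw [List.take_succ, List.getElem?_eq_getElem (by simpa using hm)]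
  simp [List.getElem_finRange]

lemma Pm_succ_ge (a : Fin n → ZMod 2) (m : ℕ) (hm : n ≤ m) :
    Pm f a (m+1) = Pm f a m := by
  unfold Pm
  rw [List.take_of_length_le (by simp; omega),
      List.take_of_length_le (by simpa using hm)]

lemma Pm_stable (a : Fin n → ZMod 2) (k : ℕ) (hk : k < n) :
    ∀ j, (Pm f a (k+1+j)) ⟨k, hk⟩ = (Pm f a (k+1)) ⟨k, hk⟩ := by
  intro j
  induction j with
  | zero => rfl
  | succ j ih =>
    rcases lt_or_ge (k+1+j) n with h | h
    · rw [show k+1+(j+1) = (k+1+j)+1 by omega, Pm_succ f a _ h,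
        Function.update_of_ne (by simp [Fin.ext_iff]; omega)]
      exact ih
    · rw [show k+1+(j+1) = (k+1+j)+1 by omega, Pm_succ_ge f a _ h]
      exact ih

lemma sds_coord (a : Fin n → ZMod 2) (m : ℕ) (hm : m < n) :
    sdsMap f a ⟨m, hm⟩ = f (Pm f a m) := by
  have h := Pm_stable f a m hm (n - (m+1))
  rw [show m+1+(n-(m+1)) = n by omega] at h
  rw [← Pm_top, h, Pm_succ f a m hm, Function.update_self]

lemma Pm_eq_mix (a : Fin n → ZMod 2) :
    ∀ m, m ≤ n → Pm f a m = mix a (sdsMap f a) m := by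
  intro m
  induction m with
  | zero => intro _; funext i; simp [mix, Pm]
  | succ k ih =>
    intro h
    have hk : k < n := by omega
    have ihk := ih (le_of_lt hk)
    rw [Pm_succ f a k hk, ihk]
    funext i
    rcases eq_or_ne i ⟨k, hk⟩ with rfl | hne
    · rw [Function.update_self]
      have hy := sds_coord f a k hk
      rw [ihk] at hy
      simp [mix, ← hy]
    · rw [Function.update_of_ne hne]
      have : i.val ≠ k := fun h => hne (Fin.ext h)
      simp only [mix]
      by_cases hlt : i.val < k
      · rw [if_pos hlt, if_pos (by omega)]
      · rw [if_neg hlt, if_neg (by omega)]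

lemma sds_coord_mix (a : Fin n → ZMod 2) (m : ℕ) (hm : m < n) :
    sdsMap f a ⟨m, hm⟩ = f (mix a (sdsMap f a) m) := by
  rw [sds_coord f a m hm, Pm_eq_mix f a m (le_of_lt hm)]

lemma mix_zero (a b : Fin n → ZMod 2) : mix a b 0 = a := by
  funext i; simp [mix]

lemma mix_top (a b : Fin n → ZMod 2) : mix a b n = b := by
  funext i; simp [mix, i.isLt]

lemma mix_succ_eq (a b : Fin n → ZMod 2) (k : ℕ) (hk : k < n)
    (h : a ⟨k, hk⟩ = b ⟨k, hk⟩) : mix a b (k+1) = mix a b k := by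
  funext i
  simp only [mix]
  by_cases hik : i.val = k
  · have : i = ⟨k, hk⟩ := Fin.ext hik
    subst this
    rw [if_pos (by omega), if_neg (by omega), h]
  · by_cases hlt : i.val < k
    · rw [if_pos (by omega), if_pos hlt]
    · rw [if_neg (by omega), if_neg hlt]


lemma prop_forward (x b : Fin n → ZMod 2)
    (hA : ∀ m (hm : m < n), b ⟨m, hm⟩ = f (mix x b m))
    (hB : ∀ m (hm : m < n), x ⟨m, hm⟩ = f (mix b x m))
    (i : ℕ) (hi : i < n) (heq : x ⟨i, hi⟩ = b ⟨i, hi⟩) :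
    ∀ k, i ≤ k → ∀ hk : k < n, x ⟨k, hk⟩ = b ⟨k, hk⟩ := by
  intro k
  induction k with
  | zero =>
    intro h0 hk
    have : i = 0 := by omega
    subst this
    exact heq
  | succ k ih =>
    intro hik hk1
    rcases eq_or_lt_of_le hik with h | h
    · have : (⟨i, hi⟩ : Fin n) = ⟨k+1, hk1⟩ := Fin.ext h
      rw [← this]; exact heq
    · have hik' : i ≤ k := by omega
      have hk : k < n := by omega
      have he : x ⟨k, hk⟩ = b ⟨k, hk⟩ := ih hik' hk
      have hmx : mix x b (k+1) = mix x b k := mix_succ_eq x b k hk he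
      have hmb : mix b x (k+1) = mix b x k := mix_succ_eq b x k hk he.symm
      calc x ⟨k+1, hk1⟩ = f (mix b x (k+1)) := hB (k+1) hk1
        _ = f (mix b x k) := by rw [hmb]
        _ = x ⟨k, hk⟩ := (hB k hk).symm
        _ = b ⟨k, hk⟩ := he
        _ = f (mix x b k) := hA k hk
        _ = f (mix x b (k+1)) := by rw [hmx]
        _ = b ⟨k+1, hk1⟩ := (hA (k+1) hk1).symm

lemma core_eq (x b : Fin n → ZMod 2) (hn : 1 ≤ n)
    (hA : ∀ m (hm : m < n), b ⟨m, hm⟩ = f (mix x b m))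
    (hB : ∀ m (hm : m < n), x ⟨m, hm⟩ = f (mix b x m))
    (i : Fin n) (heq : x i = b i) : x = b := by
  have hi : i.val < n := i.isLt
  have heq' : x ⟨i.val, hi⟩ = b ⟨i.val, hi⟩ := by simpa using heq
  have hn1 : n - 1 < n := by omega
  have hlast : x ⟨n-1, hn1⟩ = b ⟨n-1, hn1⟩ :=
    prop_forward f x b hA hB i.val hi heq' (n-1) (by omega) hn1
  -- wraparound
  have hmx : mix x b ((n-1)+1) = mix x b (n-1) := mix_succ_eq x b (n-1) hn1 hlast
  rw [show (n-1)+1 = n from by omega, mix_top] at hmx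
  have hmb : mix b x ((n-1)+1) = mix b x (n-1) := mix_succ_eq b x (n-1) hn1 hlast.symm
  rw [show (n-1)+1 = n from by omega, mix_top] at hmb
  have h0n : 0 < n := by omega
  have hx0 : x ⟨0, h0n⟩ = f b := by rw [hB 0 h0n, mix_zero]
  have hb0 : b ⟨0, h0n⟩ = f x := by rw [hA 0 h0n, mix_zero]
  have hbn : b ⟨n-1, hn1⟩ = f b := (hA (n-1) hn1).trans (congrArg f hmx.symm)
  have hxn : x ⟨n-1, hn1⟩ = f x := (hB (n-1) hn1).trans (congrArg f hmb.symm)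
  have h00 : x ⟨0, h0n⟩ = b ⟨0, h0n⟩ := by
    rw [hx0, hb0, ← hbn, ← hlast, hxn]
  funext j
  have := prop_forward f x b hA hB 0 h0n h00 j.val (Nat.zero_le _) j.isLt
  simpa using this

end SDSAux


theorem stmt0 (n : ℕ) (hn : 2 ≤ n) (f : (Fin n → ZMod 2) → ZMod 2)
    (x : Fin n → ZMod 2)
    (h2 : sdsMap f (sdsMap f x) = x) (h1 : sdsMap f x ≠ x) :
    sdsMap f x = fun i => 1 + x i := by

  classical
  have hA : ∀ m (hm : m < n), sdsMap f x ⟨m, hm⟩ = f (SDSAux.mix x (sdsMap f x) m) :=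
    fun m hm => SDSAux.sds_coord_mix f x m hm
  have hB : ∀ m (hm : m < n), x ⟨m, hm⟩ = f (SDSAux.mix (sdsMap f x) x m) := by
    intro m hm
    have := SDSAux.sds_coord_mix f (sdsMap f x) m hm
    rwa [h2] at this
  have hdiff : ∀ i : Fin n, x i ≠ sdsMap f x i := by
    intro i heq
    exact h1 (SDSAux.core_eq f x (sdsMap f x) (by omega) hA hB i heq).symm
  funext i
  have h := hdiff i
  have key : ∀ u v : ZMod 2, v ≠ u → u = 1 + v := by decide
  exact key (sdsMap f x i) (x i) h
end

section
/- Let n ≥ 2 and let F be the SDS map over K_n with identity update order and common vertex function f : 𝔽₂ⁿ → 𝔽₂. If x is a fixed point of F (i.e., F(x) = x), then x is the all-zeros vector or the all-ones vector. Consequently, F has at most 2 fixed points. -/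
private lemma foldl_preserve {n : ℕ} (f : (Fin n → ZMod 2) → ZMod 2) :
    ∀ (l : List (Fin n)) (v : Fin n → ZMod 2) (j : Fin n), j ∉ l →
      (l.foldl (fun v i => Function.update v i (f v)) v) j = v j := by
  intro l
  induction l with
  | nil => intro v j _; rfl
  | cons a t ih =>
    intro v j hj
    simp only [List.mem_cons, not_or] at hj
    simp only [List.foldl_cons]
    rw [ih _ _ hj.2, Function.update_of_ne hj.1]

private lemma key {n : ℕ} (f : (Fin n → ZMod 2) → ZMod 2) :
    ∀ (l : List (Fin n)), l.Pairwise (· < ·) → ∀ v : Fin n → ZMod 2,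
      l.foldl (fun v i => Function.update v i (f v)) v = v →
      ∀ j ∈ l, v j = f v := by
  intro l
  induction l with
  | nil => intro _ v _ j hj; simp at hj
  | cons a t ih =>
    intro hp v hv j hj
    rw [List.pairwise_cons] at hp
    have ha : a ∉ t := fun h => lt_irrefl a (hp.1 a h)
    have hva : v a = f v := by
      conv_lhs => rw [← hv]
      rw [List.foldl_cons, foldl_preserve f t _ a ha, Function.update_self]
    have hstep : Function.update v a (f v) = v := by
      rw [← hva, Function.update_eq_self]
    have hv' : t.foldl (fun v i => Function.update v i (f v)) v = v := by
      conv_rhs => rw [← hv]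
      rw [List.foldl_cons, hstep]
    rcases List.mem_cons.mp hj with rfl | hjt
    · exact hva
    · exact ih hp.2 v hv' j hjt

theorem stmt1 (n : ℕ) (hn : 2 ≤ n) (f : (Fin n → ZMod 2) → ZMod 2) :
    (∀ x : Fin n → ZMod 2, sdsMap f x = x →
      x = (fun _ => 0) ∨ x = (fun _ => 1)) ∧
    Set.ncard {x : Fin n → ZMod 2 | sdsMap f x = x} ≤ 2 := by
  have main : ∀ x : Fin n → ZMod 2, sdsMap f x = x →
      x = (fun _ => 0) ∨ x = (fun _ => 1) := by
    intro x hx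
    have hall : ∀ j : Fin n, x j = f x :=
      fun j => key f (List.finRange n) (List.pairwise_lt_finRange n) x hx j
        (List.mem_finRange j)
    rcases (by decide : ∀ a : ZMod 2, a = 0 ∨ a = 1) (f x) with h | h
    · exact Or.inl (funext fun j => by rw [hall j, h])
    · exact Or.inr (funext fun j => by rw [hall j, h])
  refine ⟨main, ?_⟩
  have hsub : {x : Fin n → ZMod 2 | sdsMap f x = x} ⊆
      {(fun _ => 0), (fun _ => 1)} := fun x hx => main x hx
  calc Set.ncard {x : Fin n → ZMod 2 | sdsMap f x = x}
      ≤ Set.ncard ({(fun _ => 0), (fun _ => 1)} : Set (Fin n → ZMod 2)) :=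
        Set.ncard_le_ncard hsub ((Set.finite_singleton _).insert _)
    _ ≤ 2 := by
        have := Set.ncard_insert_le (fun _ => (0 : ZMod 2))
          ({(fun _ => 1)} : Set (Fin n → ZMod 2))
        simpa [Set.ncard_singleton] using this
end

section
/- Let n ≥ 2. Suppose x = (a₁,…,aₙ) and y = (b₁,…,bₙ) are distinct vectors in 𝔽₂ⁿ with a₁ = b₁ = 0 such that the vector x + y does not contain 101 as a subsequence (i.e., there are no indices i < j < k with a_i + b_i = 1, a_j + b_j = 0, a_k + b_k = 1). Then for any function f : 𝔽₂ⁿ → 𝔽₂, x and y cannot both be periodic points of period 2 of the SDS map F = L_{v_n} ∘ ⋯ ∘ L_{v_1}. -/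
namespace SDSAux

variable {n : ℕ} (f : (Fin n → ZMod 2) → ZMod 2)

/-- mixed state: `u` below `k`, `x` from `k` on. -/
def mixS (u x : Fin n → ZMod 2) (k : ℕ) : Fin n → ZMod 2 :=
  fun j => if (j : ℕ) < k then u j else x j

lemma foldl_apply_of_not_mem (i : Fin n) (l : List (Fin n)) (hl : ∀ j ∈ l, j ≠ i)
    (v : Fin n → ZMod 2) :
    (l.foldl (fun v i => Function.update v i (f v)) v) i = v i := by
  induction l generalizing v with
  | nil => rfl
  | cons a l ih =>
    simp only [List.foldl_cons]
    rw [ih (fun j hj => hl j (List.mem_cons_of_mem _ hj))]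
    exact Function.update_of_ne (fun h => hl a List.mem_cons_self h.symm) _ _

lemma mem_drop_finRange {m : ℕ} (j : Fin n) (hj : j ∈ (List.finRange n).drop m) :
    m ≤ (j : ℕ) := by
  obtain ⟨t, ht, hEq⟩ := List.mem_iff_getElem.mp hj
  rw [List.getElem_drop] at hEq
  subst hEq
  simp [List.getElem_finRange]

lemma sds_spec_aux (x : Fin n → ZMod 2) (k : ℕ) (hk : k ≤ n) :
    (sdsMap f x = ((List.finRange n).drop k).foldl
        (fun v i => Function.update v i (f v)) (mixS (sdsMap f x) x k))
      ∧ ∀ i : Fin n, (i : ℕ) < k → sdsMap f x i = f (mixS (sdsMap f x) x (i : ℕ)) := by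
  set u := sdsMap f x with hu
  induction k with
  | zero =>
    constructor
    · have : mixS u x 0 = x := by funext j; simp [mixS]
      rw [this]
      rfl
    · intro i hi; omega
  | succ k ih =>
    obtain ⟨h1, h2⟩ := ih (by omega)
    have hkn : k < n := by omega
    set i : Fin n := ⟨k, hkn⟩ with hidef
    have hdrop : (List.finRange n).drop k = i :: (List.finRange n).drop (k+1) := by
      rw [List.drop_eq_getElem_cons (by simp [hkn])]
      congr 1
      simp [List.getElem_finRange, hidef]
    have h1' : u = ((List.finRange n).drop (k+1)).foldl
        (fun v i => Function.update v i (f v))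
        (Function.update (mixS u x k) i (f (mixS u x k))) := by
      conv_lhs => rw [h1, hdrop]
      rfl
    have hnm : ∀ j ∈ (List.finRange n).drop (k+1), j ≠ i := by
      intro j hj hji
      have := mem_drop_finRange j hj
      rw [hji] at this
      simp only [hidef] at this
      omega
    have hui : u i = f (mixS u x k) := by
      conv_lhs => rw [h1']
      rw [foldl_apply_of_not_mem f i _ hnm, Function.update_self]
    have hmix : Function.update (mixS u x k) i (f (mixS u x k)) = mixS u x (k+1) := by
      funext j
      by_cases hji : j = i
      · subst hji
        rw [Function.update_self]
        simp only [mixS, hidef]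
        rw [if_pos (by omega)]
        exact hui.symm
      · rw [Function.update_of_ne hji]
        have hjk : (j : ℕ) ≠ k := by
          intro h; exact hji (Fin.ext (by simp [hidef, h]))
        simp only [mixS]
        by_cases h : (j : ℕ) < k
        · rw [if_pos h, if_pos (by omega)]
        · rw [if_neg h, if_neg (by omega)]
    constructor
    · conv_lhs => rw [h1']
      rw [hmix]
    · intro j hj
      by_cases h : (j : ℕ) < k
      · exact h2 j h
      · have : j = i := Fin.ext (by simp [hidef]; omega)
        subst this
        simpa [hidef] using hui

lemma sds_spec (x : Fin n → ZMod 2) (i : Fin n) :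
    sdsMap f x i = f (mixS (sdsMap f x) x (i : ℕ)) :=
  (sds_spec_aux f x n le_rfl).2 i i.isLt

lemma zmod2_ne (a b : ZMod 2) (h : a ≠ b) : a = b + 1 := by revert a b; decide

lemma zmod2_ne_sum (a b : ZMod 2) (h : a ≠ b) : a + b = 1 := by revert a b; decide

lemma zmod2_self (a : ZMod 2) : a ≠ a + 1 := by revert a; decide

/-- Key lemma: a period-2 point is mapped to its complement. -/
lemma complement_lemma (hn : 0 < n) (x : Fin n → ZMod 2)
    (h2 : sdsMap f (sdsMap f x) = x) (h1 : sdsMap f x ≠ x) :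
    ∀ i : Fin n, sdsMap f x i = x i + 1 := by
  set u := sdsMap f x with hudef
  have hu : ∀ i : Fin n, u i = f (mixS u x (i : ℕ)) := sds_spec f x
  have hx : ∀ i : Fin n, x i = f (mixS x u (i : ℕ)) := by
    intro i
    have h := sds_spec f u i
    rw [h2] at h
    exact h
  -- step: equality propagates to the right
  have step : ∀ m : ℕ, (hm : m + 1 < n) → u ⟨m, by omega⟩ = x ⟨m, by omega⟩ →
      u ⟨m+1, hm⟩ = x ⟨m+1, hm⟩ := by
    intro m hm heq
    have hmixu : mixS u x (m+1) = mixS u x m := by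
      funext j
      simp only [mixS]
      by_cases h1 : (j : ℕ) < m
      · rw [if_pos (by omega), if_pos h1]
      · by_cases h2 : (j : ℕ) < m + 1
        · have : j = ⟨m, by omega⟩ := Fin.ext (by simp; omega)
          rw [if_pos h2, if_neg h1, this]
          exact heq
        · rw [if_neg h2, if_neg h1]
    have hmixx : mixS x u (m+1) = mixS x u m := by
      funext j
      simp only [mixS]
      by_cases h1 : (j : ℕ) < m
      · rw [if_pos (by omega), if_pos h1]
      · by_cases h2 : (j : ℕ) < m + 1
        · have : j = ⟨m, by omega⟩ := Fin.ext (by simp; omega)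
          rw [if_pos h2, if_neg h1, this]
          exact heq.symm
        · rw [if_neg h2, if_neg h1]
    have e1 : u ⟨m+1, hm⟩ = u ⟨m, by omega⟩ := by
      rw [hu ⟨m+1, hm⟩, hu ⟨m, by omega⟩]
      simp only
      rw [hmixu]
    have e2 : x ⟨m+1, hm⟩ = x ⟨m, by omega⟩ := by
      rw [hx ⟨m+1, hm⟩, hx ⟨m, by omega⟩]
      simp only
      rw [hmixx]
    rw [e1, e2, heq]
  have prop : ∀ m0 m : ℕ, (h : m < n) → (hle : m0 ≤ m) → u ⟨m0, by omega⟩ = x ⟨m0, by omega⟩ →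
      u ⟨m, h⟩ = x ⟨m, h⟩ := by
    intro m0 m
    induction m with
    | zero => intro h hle heq; interval_cases m0; exact heq
    | succ m ih =>
      intro h hle heq
      rcases Nat.lt_or_ge m0 (m+1) with hlt | hge
      · exact step m h (ih (by omega) (by omega) heq)
      · have : m0 = m + 1 := by omega
        subst this
        exact heq
  -- if equality anywhere, then everywhere
  by_contra hcon
  push_neg at hcon
  obtain ⟨i0, hi0⟩ := hcon
  have heqi0 : u i0 = x i0 := by
    by_contra h
    exact hi0 (zmod2_ne _ _ h)
  have hlast : u ⟨n-1, by omega⟩ = x ⟨n-1, by omega⟩ := by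
    have := prop (i0 : ℕ) (n-1) (by omega) (by omega)
    apply this
    convert heqi0
  -- wraparound
  have hmixlastu : mixS u x (n-1) = u := by
    funext j
    simp only [mixS]
    by_cases h : (j : ℕ) < n - 1
    · rw [if_pos h]
    · rw [if_neg h]
      have : j = ⟨n-1, by omega⟩ := Fin.ext (by simp; omega)
      rw [this]
      exact hlast.symm
  have hmix0x : mixS x u 0 = u := by funext j; simp [mixS]
  have hx0 : x ⟨0, hn⟩ = u ⟨n-1, by omega⟩ := by
    rw [hx ⟨0, hn⟩, hu ⟨n-1, by omega⟩]
    simp only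
    rw [hmix0x, hmixlastu]
  have hmixlastx : mixS x u (n-1) = x := by
    funext j
    simp only [mixS]
    by_cases h : (j : ℕ) < n - 1
    · rw [if_pos h]
    · rw [if_neg h]
      have : j = ⟨n-1, by omega⟩ := Fin.ext (by simp; omega)
      rw [this]
      exact hlast
  have hmix0u : mixS u x 0 = x := by funext j; simp [mixS]
  have hu0 : u ⟨0, hn⟩ = x ⟨n-1, by omega⟩ := by
    rw [hu ⟨0, hn⟩, hx ⟨n-1, by omega⟩]
    simp only
    rw [hmix0u, hmixlastx]
  have h00 : u ⟨0, hn⟩ = x ⟨0, hn⟩ := by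
    rw [hu0, hx0, hlast]
  have : u = x := by
    funext j
    have := prop 0 (j : ℕ) j.isLt (by omega) h00
    convert this
  exact h1 this

end SDSAux

open SDSAux in
theorem stmt2 (n : ℕ) (hn : 2 ≤ n) (x y : Fin n → ZMod 2) (hxy : x ≠ y)
    (hx0 : x ⟨0, by omega⟩ = 0) (hy0 : y ⟨0, by omega⟩ = 0)
    (h101 : ¬ contains101 (x + y)) (f : (Fin n → ZMod 2) → ZMod 2) :
    ¬ ((sdsMap f (sdsMap f x) = x ∧ sdsMap f x ≠ x) ∧
       (sdsMap f (sdsMap f y) = y ∧ sdsMap f y ≠ y)) := by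
  classical
  rintro ⟨⟨hx2, hx1⟩, ⟨hy2, hy1⟩⟩
  have hn0 : 0 < n := by omega
  have hcu : ∀ i, sdsMap f x i = x i + 1 := complement_lemma f hn0 x hx2 hx1
  have hcv : ∀ i, sdsMap f y i = y i + 1 := complement_lemma f hn0 y hy2 hy1
  have fAx : ∀ i : Fin n,
      f (fun (j : Fin n) => if (j:ℕ) < (i:ℕ) then x j + 1 else x j) = x i + 1 := by
    intro i
    have h := sds_spec f x i
    have hm : mixS (sdsMap f x) x (i:ℕ)
        = fun (j : Fin n) => if (j:ℕ) < (i:ℕ) then x j + 1 else x j := by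
      funext j; simp only [mixS]
      by_cases hj : (j:ℕ) < (i:ℕ) <;> simp [hj, hcu j]
    rw [hm] at h
    rw [← h, hcu i]
  have fAy : ∀ i : Fin n,
      f (fun (j : Fin n) => if (j:ℕ) < (i:ℕ) then y j + 1 else y j) = y i + 1 := by
    intro i
    have h := sds_spec f y i
    have hm : mixS (sdsMap f y) y (i:ℕ)
        = fun (j : Fin n) => if (j:ℕ) < (i:ℕ) then y j + 1 else y j := by
      funext j; simp only [mixS]
      by_cases hj : (j:ℕ) < (i:ℕ) <;> simp [hj, hcv j]
    rw [hm] at h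
    rw [← h, hcv i]
  have fBy : ∀ i : Fin n,
      f (fun (j : Fin n) => if (j:ℕ) < (i:ℕ) then y j else y j + 1) = y i := by
    intro i
    have h := sds_spec f (sdsMap f y) i
    rw [hy2] at h
    have hm : mixS y (sdsMap f y) (i:ℕ)
        = fun (j : Fin n) => if (j:ℕ) < (i:ℕ) then y j else y j + 1 := by
      funext j; simp only [mixS]
      by_cases hj : (j:ℕ) < (i:ℕ) <;> simp [hj, hcv j]
    rw [hm] at h
    exact h.symm
  -- the difference set
  set S : Finset (Fin n) := Finset.univ.filter (fun i => x i ≠ y i) with hS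
  have hSne : S.Nonempty := by
    rcases Function.ne_iff.mp hxy with ⟨i, hi⟩
    exact ⟨i, by simp [hS, hi]⟩
  set a := S.min' hSne with ha
  set e := S.max' hSne with he
  have haS : a ∈ S := S.min'_mem hSne
  have heS : e ∈ S := S.max'_mem hSne
  have haxy : x a ≠ y a := by simpa [hS] using haS
  have hexy : x e ≠ y e := by simpa [hS] using heS
  have hae : (a:ℕ) ≤ (e:ℕ) := S.min'_le e heS
  have hbelow : ∀ j : Fin n, (j:ℕ) < (a:ℕ) → x j = y j := by
    intro j hj
    by_contra h
    have hjS : j ∈ S := by simp [hS, h]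
    have := S.min'_le j hjS
    rw [← ha] at this
    exact absurd this (by rw [Fin.le_def]; omega)
  have habove : ∀ j : Fin n, (e:ℕ) < (j:ℕ) → x j = y j := by
    intro j hj
    by_contra h
    have hjS : j ∈ S := by simp [hS, h]
    have := S.le_max' j hjS
    rw [← he] at this
    exact absurd this (by rw [Fin.le_def]; omega)
  have hblockne : ∀ j : Fin n, (a:ℕ) ≤ (j:ℕ) → (j:ℕ) ≤ (e:ℕ) → x j ≠ y j := by
    intro j hj1 hj2 heq
    have hja : (a:ℕ) ≠ (j:ℕ) := by
      intro h
      exact haxy (by rw [show a = j from Fin.ext h]; exact heq)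
    have hje : (j:ℕ) ≠ (e:ℕ) := by
      intro h
      exact hexy (by rw [show e = j from Fin.ext h.symm]; exact heq)
    apply h101
    refine ⟨a, j, e, Fin.lt_def.mpr (by omega), Fin.lt_def.mpr (by omega), ?_, ?_, ?_⟩
    · exact zmod2_ne_sum _ _ haxy
    · show x j + y j = 0
      rw [heq]
      exact (by decide : ∀ b : ZMod 2, b + b = 0) _
    · exact zmod2_ne_sum _ _ hexy
  have hblock : ∀ j : Fin n, (a:ℕ) ≤ (j:ℕ) → (j:ℕ) ≤ (e:ℕ) → x j = y j + 1 :=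
    fun j h1 h2 => zmod2_ne _ _ (hblockne j h1 h2)
  have ha1 : 0 < (a:ℕ) := by
    rcases Nat.eq_zero_or_pos (a:ℕ) with h | h
    · exfalso
      apply haxy
      have : a = ⟨0, hn0⟩ := Fin.ext h
      rw [this, hx0, hy0]
    · exact h
  have hadd : ∀ b : ZMod 2, b + 1 + 1 = b := by decide
  by_cases hcase : (e:ℕ) + 1 < n
  · -- block ends before the last coordinate
    set k : Fin n := ⟨(e:ℕ)+1, hcase⟩ with hk
    have hkv : (k:ℕ) = (e:ℕ)+1 := rfl
    have hxyk : x k = y k := habove k (by omega)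
    have E1 : (fun (j : Fin n) => if (j:ℕ) < (a:ℕ) then x j + 1 else x j)
        = (fun (j : Fin n) => if (j:ℕ) < (k:ℕ) then y j + 1 else y j) := by
      funext j
      by_cases h1 : (j:ℕ) < (a:ℕ)
      · rw [if_pos h1, if_pos (by omega), hbelow j h1]
      · rw [if_neg h1]
        by_cases h2 : (j:ℕ) < (k:ℕ)
        · rw [if_pos h2, hblock j (by omega) (by omega)]
        · rw [if_neg h2, habove j (by omega)]
    have E2 : (fun (j : Fin n) => if (j:ℕ) < (k:ℕ) then x j + 1 else x j)
        = (fun (j : Fin n) => if (j:ℕ) < (a:ℕ) then y j + 1 else y j) := by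
      funext j
      by_cases h1 : (j:ℕ) < (a:ℕ)
      · rw [if_pos (by omega), if_pos h1, hbelow j h1]
      · rw [if_neg h1]
        by_cases h2 : (j:ℕ) < (k:ℕ)
        · rw [if_pos h2, hblock j (by omega) (by omega), hadd]
        · rw [if_neg h2, habove j (by omega)]
    have E1f : x a + 1 = y k + 1 := by rw [← fAx a, ← fAy k, E1]
    have E2f : x k + 1 = y a + 1 := by rw [← fAx k, ← fAy a, E2]
    have e1 : x a = y k := by
      have h' := congrArg (· + 1) E1f
      simpa [hadd] using h'
    have e2 : x k = y a := by
      have h' := congrArg (· + 1) E2f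
      simpa [hadd] using h'
    have hfin : x a = x a + 1 := by
      calc x a = y k := e1
        _ = x k := hxyk.symm
        _ = y a := e2
        _ = x a + 1 := by
            have hb := hblock a le_rfl hae
            have h' := congrArg (· + 1) hb
            simp only [hadd] at h'
            exact h'.symm
    exact zmod2_self _ hfin
  · -- block reaches the last coordinate
    have hblock' : ∀ j : Fin n, (a:ℕ) ≤ (j:ℕ) → x j = y j + 1 := by
      intro j hj
      exact hblock j hj (by have := j.isLt; omega)
    have E1 : (fun (j : Fin n) => if (j:ℕ) < ((⟨0, hn0⟩ : Fin n):ℕ) then x j + 1 else x j)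
        = (fun (j : Fin n) => if (j:ℕ) < (a:ℕ) then y j else y j + 1) := by
      funext j
      rw [if_neg (by simp)]
      by_cases h1 : (j:ℕ) < (a:ℕ)
      · rw [if_pos h1, hbelow j h1]
      · rw [if_neg h1, hblock' j (by omega)]
    have E2 : (fun (j : Fin n) => if (j:ℕ) < (a:ℕ) then x j + 1 else x j)
        = (fun (j : Fin n) => if (j:ℕ) < ((⟨0, hn0⟩ : Fin n):ℕ) then y j else y j + 1) := by
      funext j
      by_cases h1 : (j:ℕ) < (a:ℕ)
      · rw [if_pos h1, if_neg (by simp), hbelow j h1]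
      · rw [if_neg h1, if_neg (by simp)]
        exact hblock' j (by omega)
    have E1f : x ⟨0, hn0⟩ + 1 = y a := by rw [← fAx ⟨0, hn0⟩, ← fBy a, E1]
    have E2f : x a + 1 = y ⟨0, hn0⟩ := by rw [← fAx a, ← fBy ⟨0, hn0⟩, E2]
    rw [hx0] at E1f
    rw [hy0] at E2f
    have hxa : x a = y a + 1 := hblock a le_rfl hae
    rw [← E1f] at hxa
    rw [hxa] at E2f
    exact absurd E2f (by decide)
end

section
/- For any positive integer n, the linear map T : 𝔽₂ⁿ → 𝔽₂ⁿ defined by T(x₁,…,xₙ) = (x₁, x₁+x₂, x₁+x₂+x₃, …, x₁+⋯+xₙ) is a bijection, and for every z ∈ 𝔽₂ⁿ, z contains 111 as a subsequence if and only if T(z) contains 101 as a subsequence. -/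
/-- The partial-sums linear map `T(x)_j = x_1 + x_2 + ⋯ + x_{j+1}`. -/
def partialSums {n : ℕ} (z : Fin n → ZMod 2) : Fin n → ZMod 2 :=
  fun j => ∑ i ∈ Finset.Iic j, z i

lemma zmod2_eq_one {a : ZMod 2} (h : a ≠ 0) : a = 1 := by revert h; revert a; decide

lemma zmod2_eq_zero {a : ZMod 2} (h : a ≠ 1) : a = 0 := by revert h; revert a; decide

lemma partialSums_eq_card {n : ℕ} (z : Fin n → ZMod 2) (p : Fin n) :
    partialSums z p = ((((Finset.Iic p)).filter (fun a => z a = 1)).card : ZMod 2) := by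
  unfold partialSums
  rw [← Finset.sum_filter_add_sum_filter_not (Finset.Iic p) (fun a => z a = 1)]
  have h2 : ∑ a ∈ (Finset.Iic p).filter (fun a => ¬ z a = 1), z a = 0 :=
    Finset.sum_eq_zero fun a ha => zmod2_eq_zero (Finset.mem_filter.1 ha).2
  rw [h2, add_zero,
    Finset.sum_congr rfl (fun a ha => (Finset.mem_filter.1 ha).2)]
  simp

lemma sum_Iic_split {n : ℕ} (z : Fin n → ZMod 2) {i j : Fin n} (h : i ≤ j) :
    ∑ a ∈ Finset.Iic j, z a = ∑ a ∈ Finset.Iic i, z a + ∑ a ∈ Finset.Ioc i j, z a := by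
  have hd : Disjoint (Finset.Iic i) (Finset.Ioc i j) := by
    rw [Finset.disjoint_left]
    intro a ha hb
    rw [Finset.mem_Iic] at ha
    rw [Finset.mem_Ioc] at hb
    exact absurd (lt_of_le_of_lt ha hb.1) (lt_irrefl a)
  have hu : Finset.Iic i ∪ Finset.Ioc i j = Finset.Iic j := by
    ext a
    simp only [Finset.mem_union, Finset.mem_Iic, Finset.mem_Ioc, Fin.le_def, Fin.lt_def] at *
    omega
  rw [← hu, Finset.sum_union hd]

lemma partialSums_injective {n : ℕ} : Function.Injective (partialSums (n := n)) := by
  intro a b hab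
  have key : ∀ m : ℕ, ∀ j : Fin n, (j : ℕ) < m → a j = b j := by
    intro m
    induction m with
    | zero => intro j h; omega
    | succ m ih =>
      intro j hj
      have h1 : partialSums a j = partialSums b j := congrFun hab j
      unfold partialSums at h1
      rw [← Finset.Iio_insert, Finset.sum_insert (by simp),
          Finset.sum_insert (by simp)] at h1
      have h2 : ∑ i ∈ Finset.Iio j, a i = ∑ i ∈ Finset.Iio j, b i :=
        Finset.sum_congr rfl fun i hi => by
          have : (i : ℕ) < (j : ℕ) := Fin.lt_def.1 (Finset.mem_Iio.1 hi)
          exact ih i (by omega)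
      rw [h2] at h1
      exact add_right_cancel h1
  funext j
  exact key ((j : ℕ) + 1) j (by omega)

theorem stmt7 (n : ℕ) (hn : 1 ≤ n) :
    Function.Bijective (partialSums (n := n)) ∧
    ∀ z : Fin n → ZMod 2, contains111 z ↔ contains101 (partialSums z) := by
  constructor
  · exact Finite.injective_iff_bijective.1 partialSums_injective
  intro z
  constructor
  · rintro ⟨i, j, k, hij, hjk, hi, hj, hk⟩
    set S : Finset (Fin n) := Finset.univ.filter (fun a => z a = 1) with hS
    have hmem : ∀ a, z a = 1 → a ∈ S := fun a ha => by simp [hS, ha]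
    have hsub : ({i, j, k} : Finset (Fin n)) ⊆ S := by
      intro a ha
      simp only [Finset.mem_insert, Finset.mem_singleton] at ha
      rcases ha with rfl | rfl | rfl
      exacts [hmem _ hi, hmem _ hj, hmem _ hk]
    have hcard3 : ({i, j, k} : Finset (Fin n)).card = 3 := by
      rw [Finset.card_insert_of_notMem (by simp [hij.ne, (hij.trans hjk).ne]),
          Finset.card_insert_of_notMem (by simp [hjk.ne])]
      simp
    have hS3 : 3 ≤ S.card := hcard3 ▸ Finset.card_le_card hsub
    set f := S.orderEmbOfFin (k := S.card) rfl with hf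
    have hrange : Set.range f = (S : Set (Fin n)) := Finset.range_orderEmbOfFin S rfl
    have hmono : StrictMono f := (S.orderEmbOfFin rfl).strictMono
    -- count of ones up to f m is m + 1
    have hcount : ∀ m : Fin S.card,
        ((Finset.Iic (f m)).filter (fun a => z a = 1)).card = (m : ℕ) + 1 := by
      intro m
      have : (Finset.Iic (f m)).filter (fun a => z a = 1) =
          (Finset.Iic m).image f := by
        ext a
        simp only [Finset.mem_filter, Finset.mem_Iic, Finset.mem_image]
        constructor
        · rintro ⟨hle, h1⟩
          have : a ∈ Set.range f := hrange ▸ (by simpa [hS] using hmem a h1)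
          obtain ⟨t, rfl⟩ := this
          exact ⟨t, (OrderEmbedding.le_iff_le f).1 hle, rfl⟩
        · rintro ⟨t, ht, rfl⟩
          refine ⟨(OrderEmbedding.le_iff_le f).2 ht, ?_⟩
          have : f t ∈ (S : Set (Fin n)) := hrange ▸ Set.mem_range_self t
          simpa [hS] using this
      rw [this, Finset.card_image_of_injective _ (f : Fin S.card ↪o Fin n).injective,
          Fin.card_Iic]
    have h0 : (0 : ℕ) < S.card := by omega
    have h1 : (1 : ℕ) < S.card := by omega
    have h2 : (2 : ℕ) < S.card := by omega
    refine ⟨f ⟨0, h0⟩, f ⟨1, h1⟩, f ⟨2, h2⟩, hmono (by simp), hmono (by simp [Fin.lt_def]), ?_, ?_, ?_⟩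
    · rw [partialSums_eq_card, hcount]; show ((0 + 1 : ℕ) : ZMod 2) = 1; decide
    · rw [partialSums_eq_card, hcount]; show ((1 + 1 : ℕ) : ZMod 2) = 0; decide
    · rw [partialSums_eq_card, hcount]; show ((2 + 1 : ℕ) : ZMod 2) = 1; decide
  · rintro ⟨i, j, k, hij, hjk, hi, hj, hk⟩
    -- a one in Iic i
    have ex1 : ∃ a ∈ Finset.Iic i, z a ≠ 0 := by
      by_contra h
      push_neg at h
      have : partialSums z i = 0 := Finset.sum_eq_zero h
      rw [hi] at this; exact one_ne_zero this
    -- a one in Ioc i j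
    have split1 : partialSums z j = partialSums z i + ∑ a ∈ Finset.Ioc i j, z a :=
      sum_Iic_split z hij.le
    have ex2 : ∃ b ∈ Finset.Ioc i j, z b ≠ 0 := by
      by_contra h
      push_neg at h
      rw [hj, hi, Finset.sum_eq_zero h, add_zero] at split1
      exact one_ne_zero split1.symm
    have split2 : partialSums z k = partialSums z j + ∑ a ∈ Finset.Ioc j k, z a :=
      sum_Iic_split z hjk.le
    have ex3 : ∃ c ∈ Finset.Ioc j k, z c ≠ 0 := by
      by_contra h
      push_neg at h
      rw [hk, hj, Finset.sum_eq_zero h, zero_add] at split2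
      exact one_ne_zero split2
    obtain ⟨a, ha, ha1⟩ := ex1
    obtain ⟨b, hb, hb1⟩ := ex2
    obtain ⟨c, hc, hc1⟩ := ex3
    rw [Finset.mem_Iic] at ha
    rw [Finset.mem_Ioc] at hb hc
    exact ⟨a, b, c, lt_of_le_of_lt ha hb.1, lt_of_le_of_lt hb.2 hc.1,
      zmod2_eq_one ha1, zmod2_eq_one hb1, zmod2_eq_one hc1⟩
end

section
/- For any positive integer n, the graph J_n (vertex set 𝔽₂ⁿ, with x ~ y iff x + y contains 111 as a subsequence) is isomorphic to the graph H_n (vertex set 𝔽₂ⁿ, with x ~ y iff x + y contains 101 as a subsequence). In particular, ω(J_n) = ω(H_n). -/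
namespace Stmt8Aux

variable {n : ℕ}

/-- Partial sums of `z` over coordinates with index `< m`. -/
def pSum (z : Fin n → ZMod 2) (m : ℕ) : ZMod 2 :=
  ∑ a : Fin n, if (a : ℕ) < m then z a else 0

/-- The partial-sums map. -/
def Tmap (z : Fin n → ZMod 2) : Fin n → ZMod 2 :=
  fun i => pSum z ((i : ℕ) + 1)

lemma two01 : ∀ a : ZMod 2, a = 0 ∨ a = 1 := by decide

lemma ne_zero_eq_one {a : ZMod 2} (h : a ≠ 0) : a = 1 := by
  rcases two01 a with h0 | h1
  · exact absurd h0 h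
  · exact h1

lemma pSum_zero (z : Fin n → ZMod 2) : pSum z 0 = 0 := by
  simp [pSum]

lemma pSum_succ (z : Fin n → ZMod 2) {m : ℕ} (h : m < n) :
    pSum z (m + 1) = pSum z m + z ⟨m, h⟩ := by
  have key : ∀ x : Fin n,
      (if (x : ℕ) < m + 1 then z x else 0)
        = (if (x : ℕ) < m then z x else 0) + (if x = ⟨m, h⟩ then z x else 0) := by
    intro x
    by_cases hx : x = ⟨m, h⟩
    · subst hx; simp
    · have hxm : (x : ℕ) ≠ m := by
        intro he; exact hx (Fin.ext he)
      split_ifs with h1 h2 h2 <;> first | ring1 | (exfalso; omega)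
  calc pSum z (m + 1) = ∑ x : Fin n, ((if (x : ℕ) < m then z x else 0)
        + (if x = ⟨m, h⟩ then z x else 0)) := Finset.sum_congr rfl (fun x _ => key x)
    _ = pSum z m + ∑ x : Fin n, (if x = ⟨m, h⟩ then z x else 0) := by
        rw [Finset.sum_add_distrib]; rfl
    _ = pSum z m + z ⟨m, h⟩ := by
        congr 1
        simp

/-- The sum of `z` over a window of indices. -/
def seg (z : Fin n → ZMod 2) (m m' : ℕ) : ZMod 2 :=
  ∑ a : Fin n, if m ≤ (a : ℕ) ∧ (a : ℕ) < m' then z a else 0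

lemma pSum_split (z : Fin n → ZMod 2) {m m' : ℕ} (h : m ≤ m') :
    pSum z m' = pSum z m + seg z m m' := by
  have key : ∀ x : Fin n,
      (if (x : ℕ) < m' then z x else 0)
        = (if (x : ℕ) < m then z x else 0)
          + (if m ≤ (x : ℕ) ∧ (x : ℕ) < m' then z x else 0) := by
    intro x
    split_ifs <;> first | ring1 | (exfalso; omega)
  calc pSum z m' = ∑ x : Fin n, ((if (x : ℕ) < m then z x else 0)
        + (if m ≤ (x : ℕ) ∧ (x : ℕ) < m' then z x else 0)) :=
          Finset.sum_congr rfl (fun x _ => key x)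
    _ = pSum z m + seg z m m' := by rw [Finset.sum_add_distrib]; rfl

lemma seg_witness {z : Fin n → ZMod 2} {m m' : ℕ} (h : seg z m m' ≠ 0) :
    ∃ x : Fin n, m ≤ (x : ℕ) ∧ (x : ℕ) < m' ∧ z x = 1 := by
  obtain ⟨x, -, hx⟩ := Finset.exists_ne_zero_of_sum_ne_zero h
  by_cases hc : m ≤ (x : ℕ) ∧ (x : ℕ) < m'
  · refine ⟨x, hc.1, hc.2, ?_⟩
    rw [if_pos hc] at hx
    exact ne_zero_eq_one hx
  · rw [if_neg hc] at hx; exact absurd rfl hx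

lemma key_iff (z : Fin n → ZMod 2) : contains111 z ↔ contains101 (Tmap z) := by
  constructor
  · rintro ⟨i, j, k, hij, hjk, hzi, hzj, hzk⟩
    have hij' : (i : ℕ) < j := hij
    have hjk' : (j : ℕ) < k := hjk
    have hSi : pSum z ((i : ℕ) + 1) = pSum z i + 1 := by
      rw [pSum_succ z i.isLt]; simp [hzi]
    have hSj : pSum z ((j : ℕ) + 1) = pSum z j + 1 := by
      rw [pSum_succ z j.isLt]; simp [hzj]
    have hSk : pSum z ((k : ℕ) + 1) = pSum z k + 1 := by
      rw [pSum_succ z k.isLt]; simp [hzk]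
    suffices hnat : ∃ p q r : ℕ, p < q ∧ q < r ∧ r < n ∧
        pSum z (p + 1) = 1 ∧ pSum z (q + 1) = 0 ∧ pSum z (r + 1) = 1 by
      obtain ⟨p, q, r, hpq, hqr, hrn, h1, h2, h3⟩ := hnat
      exact ⟨⟨p, by omega⟩, ⟨q, by omega⟩, ⟨r, hrn⟩,
        by rw [Fin.lt_def]; exact hpq, by rw [Fin.lt_def]; exact hqr, h1, h2, h3⟩
    rcases two01 (pSum z ((j : ℕ) + 1)) with hj0 | hj1
    · have hp : ∃ p : ℕ, p < (j : ℕ) ∧ pSum z (p + 1) = 1 := by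
        rcases two01 (pSum z ((i : ℕ) + 1)) with hi0 | hi1
        · have hSi1 : pSum z (i : ℕ) = 1 := by
            rw [hi0] at hSi
            have h2 : pSum z (i : ℕ) = -1 := by linear_combination -hSi
            rw [h2]; decide
          have hipos : (i : ℕ) ≠ 0 := by
            intro h0; rw [h0, pSum_zero] at hSi1; exact one_ne_zero hSi1.symm
          exact ⟨(i : ℕ) - 1, by omega, by rw [Nat.sub_add_cancel (by omega)]; exact hSi1⟩
        · exact ⟨(i : ℕ), hij', hi1⟩
      have hr : ∃ r : ℕ, (j : ℕ) < r ∧ r < n ∧ pSum z (r + 1) = 1 := by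
        rcases two01 (pSum z ((k : ℕ) + 1)) with hk0 | hk1
        · have hSk1 : pSum z (k : ℕ) = 1 := by
            rw [hk0] at hSk
            have h2 : pSum z (k : ℕ) = -1 := by linear_combination -hSk
            rw [h2]; decide
          have hne : (k : ℕ) - 1 ≠ (j : ℕ) := by
            intro he
            have hkj : (k : ℕ) = (j : ℕ) + 1 := by omega
            rw [hkj] at hSk1
            rw [hSk1] at hj0
            exact one_ne_zero hj0
          refine ⟨(k : ℕ) - 1, by omega, by omega, ?_⟩
          rw [Nat.sub_add_cancel (by omega)]; exact hSk1
        · exact ⟨(k : ℕ), hjk', k.isLt, hk1⟩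
      obtain ⟨p, hpj, hp1⟩ := hp
      obtain ⟨r, hjr, hrn, hr1⟩ := hr
      exact ⟨p, (j : ℕ), r, hpj, hjr, hrn, hp1, hj0, hr1⟩
    · have hSj0 : pSum z (j : ℕ) = 0 := by
        rw [hj1] at hSj
        have h2 : pSum z (j : ℕ) = 1 - 1 := by linear_combination -hSj
        simpa using h2
      have hjpos : 1 ≤ (j : ℕ) := by omega
      have hp : ∃ p : ℕ, p < (j : ℕ) - 1 ∧ pSum z (p + 1) = 1 := by
        rcases two01 (pSum z ((i : ℕ) + 1)) with hi0 | hi1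
        · have hSi1 : pSum z (i : ℕ) = 1 := by
            rw [hi0] at hSi
            have h2 : pSum z (i : ℕ) = -1 := by linear_combination -hSi
            rw [h2]; decide
          have hipos : (i : ℕ) ≠ 0 := by
            intro h0; rw [h0, pSum_zero] at hSi1; exact one_ne_zero hSi1.symm
          exact ⟨(i : ℕ) - 1, by omega, by rw [Nat.sub_add_cancel (by omega)]; exact hSi1⟩
        · have hne : (i : ℕ) ≠ (j : ℕ) - 1 := by
            intro he
            have hij1 : (i : ℕ) + 1 = (j : ℕ) := by omega
            rw [hij1] at hi1; rw [hi1] at hSj0; exact one_ne_zero hSj0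
          exact ⟨(i : ℕ), by omega, hi1⟩
      obtain ⟨p, hpj, hp1⟩ := hp
      refine ⟨p, (j : ℕ) - 1, (j : ℕ), hpj, by omega, j.isLt, hp1, ?_, hj1⟩
      rw [Nat.sub_add_cancel hjpos]; exact hSj0
  · rintro ⟨a, b, c, hab, hbc, ha1, hb0, hc1⟩
    have hab' : (a : ℕ) < b := hab
    have hbc' : (b : ℕ) < c := hbc
    have ha1' : pSum z ((a : ℕ) + 1) = 1 := ha1
    have hb0' : pSum z ((b : ℕ) + 1) = 0 := hb0
    have hc1' : pSum z ((c : ℕ) + 1) = 1 := hc1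
    have hs1 : seg z 0 ((a : ℕ) + 1) ≠ 0 := by
      have hsp := pSum_split z (Nat.zero_le ((a : ℕ) + 1))
      rw [pSum_zero, zero_add] at hsp
      rw [← hsp]
      rw [ha1']
      exact one_ne_zero
    have hs2 : seg z ((a : ℕ) + 1) ((b : ℕ) + 1) ≠ 0 := by
      have hsp := pSum_split z (show (a : ℕ) + 1 ≤ (b : ℕ) + 1 by omega)
      intro h
      rw [h, add_zero, hb0'] at hsp
      rw [ha1'] at hsp
      exact one_ne_zero hsp.symm
    have hs3 : seg z ((b : ℕ) + 1) ((c : ℕ) + 1) ≠ 0 := by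
      have hsp := pSum_split z (show (b : ℕ) + 1 ≤ (c : ℕ) + 1 by omega)
      intro h
      rw [h, add_zero, hb0', hc1'] at hsp
      exact one_ne_zero hsp
    obtain ⟨i, -, hia, hzi⟩ := seg_witness hs1
    obtain ⟨j, haj, hjb, hzj⟩ := seg_witness hs2
    obtain ⟨k, hbk, hkc, hzk⟩ := seg_witness hs3
    exact ⟨i, j, k, by rw [Fin.lt_def]; omega, by rw [Fin.lt_def]; omega, hzi, hzj, hzk⟩

lemma Tmap_add (x y : Fin n → ZMod 2) : Tmap (x + y) = Tmap x + Tmap y := by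
  funext i
  show pSum (x + y) _ = pSum x _ + pSum y _
  unfold pSum
  rw [← Finset.sum_add_distrib]
  refine Finset.sum_congr rfl (fun a _ => ?_)
  split_ifs <;> simp

lemma Tmap_injective : Function.Injective (Tmap (n := n)) := by
  intro x y hxy
  have hS : ∀ m : ℕ, pSum x m = pSum y m := by
    intro m
    match m with
    | 0 => rw [pSum_zero, pSum_zero]
    | (m + 1) =>
      by_cases hm : m < n
      · exact congrFun hxy ⟨m, hm⟩
      · have hx : pSum x (m + 1) = ∑ a : Fin n, x a := by
          refine Finset.sum_congr rfl (fun a _ => ?_)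
          rw [if_pos (by omega)]
        have hy : pSum y (m + 1) = ∑ a : Fin n, y a := by
          refine Finset.sum_congr rfl (fun a _ => ?_)
          rw [if_pos (by omega)]
        by_cases hn0 : n = 0
        · subst hn0; rw [hx, hy]; simp
        · have hn' : n - 1 < n := by omega
          have h1 : pSum x n = ∑ a : Fin n, x a := by
            refine Finset.sum_congr rfl (fun a _ => ?_)
            rw [if_pos a.isLt]
          have h2 : pSum y n = ∑ a : Fin n, y a := by
            refine Finset.sum_congr rfl (fun a _ => ?_)
            rw [if_pos a.isLt]
          have h3 : pSum x n = pSum y n := by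
            have := congrFun hxy ⟨n - 1, hn'⟩
            simpa [Tmap, Nat.sub_add_cancel (by omega : 1 ≤ n)] using this
          rw [hx, hy, ← h1, ← h2, h3]
  funext i
  have h1 := hS (i : ℕ)
  have h2 := hS ((i : ℕ) + 1)
  rw [pSum_succ x i.isLt, pSum_succ y i.isLt, h1] at h2
  have := add_left_cancel h2
  simpa using this

lemma Tmap_bijective : Function.Bijective (Tmap (n := n)) :=
  (Finite.injective_iff_bijective).mp Tmap_injective

end Stmt8Aux

theorem stmt8 (n : ℕ) (hn : 1 ≤ n) :
    ∃ φ : (Fin n → ZMod 2) → (Fin n → ZMod 2),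
      Function.Bijective φ ∧
      (∀ x y : Fin n → ZMod 2,
        contains111 (x + y) ↔ contains101 (φ x + φ y)) ∧
      ∀ m : ℕ,
        (IsGreatest {k : ℕ | ∃ S : Finset (Fin n → ZMod 2),
          (∀ x ∈ S, ∀ y ∈ S, x ≠ y → contains111 (x + y)) ∧ S.card = k} m ↔
         IsGreatest {k : ℕ | ∃ S : Finset (Fin n → ZMod 2),
          (∀ x ∈ S, ∀ y ∈ S, x ≠ y → contains101 (x + y)) ∧ S.card = k} m) := by
  classical
  refine ⟨Stmt8Aux.Tmap, Stmt8Aux.Tmap_bijective, ?_, ?_⟩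
  · intro x y
    rw [← Stmt8Aux.Tmap_add]
    exact Stmt8Aux.key_iff (x + y)
  · have hiff : ∀ x y : Fin n → ZMod 2,
        contains111 (x + y) ↔ contains101 (Stmt8Aux.Tmap x + Stmt8Aux.Tmap y) := by
      intro x y
      rw [← Stmt8Aux.Tmap_add]
      exact Stmt8Aux.key_iff (x + y)
    obtain ⟨ψ, hψl, hψr⟩ :=
      Function.bijective_iff_has_inverse.mp (Stmt8Aux.Tmap_bijective (n := n))
    have hsets : {k : ℕ | ∃ S : Finset (Fin n → ZMod 2),
          (∀ x ∈ S, ∀ y ∈ S, x ≠ y → contains111 (x + y)) ∧ S.card = k}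
        = {k : ℕ | ∃ S : Finset (Fin n → ZMod 2),
          (∀ x ∈ S, ∀ y ∈ S, x ≠ y → contains101 (x + y)) ∧ S.card = k} := by
      ext k
      constructor
      · rintro ⟨S, hS, rfl⟩
        refine ⟨S.image Stmt8Aux.Tmap, ?_, ?_⟩
        · intro x' hx' y' hy' hne
          obtain ⟨x, hx, rfl⟩ := Finset.mem_image.mp hx'
          obtain ⟨y, hy, rfl⟩ := Finset.mem_image.mp hy'
          have hxy : x ≠ y := fun h => hne (by rw [h])
          exact (hiff x y).1 (hS x hx y hy hxy)
        · exact Finset.card_image_of_injective S Stmt8Aux.Tmap_injective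
      · rintro ⟨S, hS, rfl⟩
        have hψinj : Function.Injective ψ := hψr.injective
        refine ⟨S.image ψ, ?_, ?_⟩
        · intro x' hx' y' hy' hne
          obtain ⟨x, hx, rfl⟩ := Finset.mem_image.mp hx'
          obtain ⟨y, hy, rfl⟩ := Finset.mem_image.mp hy'
          have hxy : x ≠ y := fun h => hne (by rw [h])
          have h101 : contains101 (x + y) := hS x hx y hy hxy
          have : contains101 (Stmt8Aux.Tmap (ψ x) + Stmt8Aux.Tmap (ψ y)) := by
            rw [hψr x, hψr y]; exact h101
          exact (hiff (ψ x) (ψ y)).2 this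
        · exact Finset.card_image_of_injective S hψinj
    intro m
    rw [hsets]
end

section
/- For every positive integer n, η_{n+1} = A(n,3), where η_m is the maximum over all f : 𝔽₂^m → 𝔽₂ of the number of 2-cycles in the phase space of the SDS map [K_m, f, id], and A(n,3) is the maximum size of a binary code of length n with minimum distance at least 3. -/
namespace Stmt10Aux


variable {m : ℕ}

/-- intermediate states of the sweep -/
def chain (f : (Fin m → ZMod 2) → ZMod 2) (x : Fin m → ZMod 2) : ℕ → (Fin m → ZMod 2)
  | 0 => x
  | k + 1 =>
    if h : k < m then
      Function.update (chain f x k) ⟨k, h⟩ (f (chain f x k))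
    else chain f x k

def mixN (x y : Fin m → ZMod 2) (k : ℕ) : Fin m → ZMod 2 :=
  fun j => if (j : ℕ) < k then y j else x j

lemma sdsMap_eq_chain (f : (Fin m → ZMod 2) → ZMod 2) (x : Fin m → ZMod 2) :
    sdsMap f x = chain f x m := by
  have key : ∀ k ≤ m,
      (List.take k (List.finRange m)).foldl (fun v i => Function.update v i (f v)) x
        = chain f x k := by
    intro k hk
    induction k with
    | zero => simp [chain]
    | succ k ih =>
      have hk' : k < m := by omega
      have hlen : k < (List.finRange m).length := by simp [hk']
      rw [List.take_succ]
      have : (List.finRange m)[k]? = some ⟨k, hk'⟩ := by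
        rw [List.getElem?_eq_getElem hlen, List.getElem_finRange]
        rfl
      rw [this]
      simp only [Option.toList_some, List.foldl_append, List.foldl_cons, List.foldl_nil]
      rw [ih (by omega)]
      simp [chain, hk']
  have := key m le_rfl
  rwa [List.take_of_length_le (by simp)] at this

lemma chain_high (f : (Fin m → ZMod 2) → ZMod 2) (x : Fin m → ZMod 2) :
    ∀ k (j : Fin m), k ≤ (j : ℕ) → chain f x k j = x j := by
  intro k
  induction k with
  | zero => intro j _; rfl
  | succ k ih =>
    intro j hj
    simp only [chain]
    split
    · rw [Function.update_of_ne]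
      · exact ih j (by omega)
      · intro h; rw [h] at hj; simp at hj
    · exact ih j (by omega)

lemma chain_low (f : (Fin m → ZMod 2) → ZMod 2) (x : Fin m → ZMod 2) :
    ∀ k d (j : Fin m), (j : ℕ) < k → chain f x (k + d) j = chain f x k j := by
  intro k d
  induction d with
  | zero => intro j _; rfl
  | succ d ih =>
    intro j hj
    have : k + (d + 1) = (k + d) + 1 := by omega
    rw [this]
    simp only [chain]
    split
    · rw [Function.update_of_ne]
      · exact ih j hj
      · intro h; rw [h] at hj; simp at hj
    · exact ih j hj

lemma master (f : (Fin m → ZMod 2) → ZMod 2) (x y : Fin m → ZMod 2) :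
    sdsMap f x = y ↔ ∀ i : Fin m, y i = f (mixN x y (i : ℕ)) := by
  constructor
  · intro h i
    subst h
    rw [sdsMap_eq_chain]
    have hi : (i : ℕ) < m := i.isLt
    have hchain_i : chain f x (i : ℕ) = mixN x (chain f x m) (i : ℕ) := by
      funext j
      by_cases hj : (j : ℕ) < (i : ℕ)
      · have : (j : ℕ) + (m - (j : ℕ)) = m := by omega
        have h1 : chain f x m j = chain f x ((j:ℕ)+1) j := by
          have h2 := chain_low f x ((j:ℕ)+1) (m - ((j:ℕ)+1)) j (by omega)
          rw [show (j:ℕ)+1 + (m - ((j:ℕ)+1)) = m by omega] at h2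
          exact h2
        have h3 : chain f x (i : ℕ) j = chain f x ((j:ℕ)+1) j := by
          have h4 := chain_low f x ((j:ℕ)+1) ((i:ℕ) - ((j:ℕ)+1)) j (by omega)
          rw [show (j:ℕ)+1 + ((i:ℕ) - ((j:ℕ)+1)) = (i:ℕ) by omega] at h4
          exact h4
        simp only [mixN, if_pos hj]
        rw [h3, ← h1]
      · simp only [mixN, if_neg hj]
        exact chain_high f x _ j (by omega)
    have hstep : chain f x m i = f (chain f x (i : ℕ)) := by
      have h1 : chain f x m i = chain f x ((i:ℕ)+1) i := by
        have h2 := chain_low f x ((i:ℕ)+1) (m - ((i:ℕ)+1)) i (by omega)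
        rw [show (i:ℕ)+1 + (m - ((i:ℕ)+1)) = m by omega] at h2
        exact h2
      rw [h1]
      simp only [chain, dif_pos hi]
      have : (⟨(i:ℕ), hi⟩ : Fin m) = i := rfl
      rw [this, Function.update_self]
    rw [hstep, hchain_i]
  · intro h
    have key : ∀ k ≤ m, chain f x k = mixN x y k := by
      intro k hk
      induction k with
      | zero =>
        funext j; simp [chain, mixN]
      | succ k ih =>
        have hk' : k < m := by omega
        funext j
        simp only [chain, dif_pos hk']
        rw [ih (by omega)]
        by_cases hj : j = ⟨k, hk'⟩
        · subst hj
          rw [Function.update_self]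
          have := h ⟨k, hk'⟩
          simp only [mixN]
          rw [if_pos (by simp)]
          exact (this).symm
        · rw [Function.update_of_ne hj]
          have hjk : (j : ℕ) ≠ k := by
            intro hc; apply hj; exact Fin.ext hc
          simp only [mixN]
          by_cases h2 : (j:ℕ) < k
          · rw [if_pos h2, if_pos (by omega)]
          · rw [if_neg h2, if_neg (by omega)]
    rw [sdsMap_eq_chain, key m le_rfl]
    funext j
    simp [mixN, j.isLt]


lemma zcases : ∀ a : ZMod 2, a = 0 ∨ a = 1 := by decide
lemma zadd_self : ∀ a : ZMod 2, a + a = 0 := by decide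
lemma zss : ∀ a : ZMod 2, a + 1 + 1 = a := by decide
lemma zne : ∀ a b : ZMod 2, a ≠ b ↔ b = a + 1 := by decide

variable {n : ℕ}

def pt (x : Fin (n+1) → ZMod 2) (k : ℕ) : Fin (n+1) → ZMod 2 :=
  fun j => if (j : ℕ) < k then x j + 1 else x j

def TwoCyc (f : (Fin (n+1) → ZMod 2) → ZMod 2) (x : Fin (n+1) → ZMod 2) : Prop :=
  ∀ i : Fin (n+1), f (pt x (i : ℕ)) = x i + 1

/-- one-step mix equality -/
lemma mix_step {x y : Fin (n+1) → ZMod 2} {k : ℕ} (hk : k < n+1)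
    (h : x ⟨k, hk⟩ = y ⟨k, hk⟩) : mixN x y k = mixN x y (k+1) := by
  funext j
  simp only [mixN]
  by_cases h1 : (j : ℕ) < k
  · rw [if_pos h1, if_pos (by omega)]
  · by_cases h2 : (j : ℕ) = k
    · have : j = ⟨k, hk⟩ := Fin.ext h2
      subst this
      rw [if_neg h1, if_pos (by omega), h]
    · rw [if_neg h1, if_neg (by omega)]

lemma complement {f : (Fin (n+1) → ZMod 2) → ZMod 2} {x y : Fin (n+1) → ZMod 2}
    (hx : ∀ i : Fin (n+1), y i = f (mixN x y (i : ℕ)))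
    (hy : ∀ i : Fin (n+1), x i = f (mixN y x (i : ℕ)))
    (hne : x ≠ y) : ∀ j, y j = x j + 1 := by
  -- propagation upward
  have prop : ∀ (k : ℕ) (hk : k < n+1), x ⟨k, hk⟩ = y ⟨k, hk⟩ →
      ∀ (l : ℕ) (hl : l < n+1), k ≤ l → x ⟨l, hl⟩ = y ⟨l, hl⟩ := by
    intro k hk hxy l
    induction l with
    | zero => intro hl hkl; have : k = 0 := by omega
              subst this; exact hxy
    | succ l ih =>
      intro hl hkl
      by_cases hkl' : k ≤ l
      · have hl' : l < n+1 := by omega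
        have hprev : x ⟨l, hl'⟩ = y ⟨l, hl'⟩ := ih hl' hkl'
        have hmx := mix_step hl' hprev.symm  -- mixN y x l = mixN y x (l+1)? careful
        have hmy := mix_step hl' hprev
        -- y side
        have e1 : y ⟨l, hl'⟩ = y ⟨l+1, hl⟩ := by
          rw [hx ⟨l, hl'⟩, hx ⟨l+1, hl⟩]
          simp only [Fin.val_mk]
          rw [hmy]
        have e2 : x ⟨l, hl'⟩ = x ⟨l+1, hl⟩ := by
          rw [hy ⟨l, hl'⟩, hy ⟨l+1, hl⟩]
          simp only [Fin.val_mk]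
          rw [hmx]
        rw [← e1, ← e2]; exact hprev
      · have : k = l + 1 := by omega
        subst this; exact hxy
  -- if last coords agree, x = y
  have hlast : x ⟨n, by omega⟩ = y ⟨n, by omega⟩ → False := by
    intro hl
    have hmfull : mixN x y (n+1) = y := by
      funext j; simp [mixN, j.isLt]
    have hmfull' : mixN y x (n+1) = x := by
      funext j; simp [mixN, j.isLt]
    have h1 : y ⟨n, by omega⟩ = f y := by
      have := hx ⟨n, by omega⟩
      rw [this]
      simp only [Fin.val_mk]
      rw [mix_step (by omega) hl, hmfull]
    have h2 : x ⟨n, by omega⟩ = f x := by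
      have := hy ⟨n, by omega⟩
      rw [this]
      simp only [Fin.val_mk]
      rw [mix_step (by omega) hl.symm, hmfull']
    have hm0x : mixN x y 0 = x := by funext j; simp [mixN]
    have hm0y : mixN y x 0 = y := by funext j; simp [mixN]
    have h3 : y 0 = f x := by
      have := hx 0; rwa [Fin.val_zero, hm0x] at this
    have h4 : x 0 = f y := by
      have := hy 0; rwa [Fin.val_zero, hm0y] at this
    have h03 : x 0 = y 0 := by
      rw [h3, h4, ← h1, ← h2, hl]
    have : x = y := by
      funext j
      have := prop 0 (by omega) (by
        have : (0 : Fin (n+1)) = ⟨0, by omega⟩ := rfl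
        rwa [this] at h03) (j : ℕ) j.isLt (by omega)
      have hj : (⟨(j:ℕ), j.isLt⟩ : Fin (n+1)) = j := rfl
      rwa [hj] at this
    exact hne this
  intro j
  rcases zcases (y j) with h0 | h0 <;> rcases zcases (x j) with h1 | h1 <;>
    try (rw [h0, h1]; decide)
  all_goals {
    exfalso
    apply hlast
    exact prop (j : ℕ) j.isLt (by rw [show (⟨(j:ℕ), j.isLt⟩ : Fin (n+1)) = j from rfl, h0, h1])
      n (by omega) (by omega)
  }

lemma mixN_pt (x : Fin (n+1) → ZMod 2) (k : ℕ) :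
    mixN x (x + 1) k = pt x k := by
  funext j; simp [mixN, pt]

lemma mixN_pt' (x : Fin (n+1) → ZMod 2) (k : ℕ) :
    mixN (x + 1) x k = pt (x + 1) k := by
  funext j
  simp only [mixN, pt, Pi.add_apply, Pi.one_apply]
  split
  · exact (zss (x j)).symm
  · rfl

lemma add_one_add_one (x : Fin (n+1) → ZMod 2) : x + 1 + 1 = x := by
  funext j; exact zss (x j)

lemma ne_add_one (x : Fin (n+1) → ZMod 2) : x ≠ x + 1 := by
  intro h
  have := congrFun h 0
  simp only [Pi.add_apply, Pi.one_apply] at this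
  rcases zcases (x 0) with h0 | h0 <;> rw [h0] at this <;>
    first
      | exact absurd this (by decide)
      | exact absurd this.symm (by decide)

/-- bridge: TwoCyc pair gives a genuine 2-cycle -/
lemma bridge_back {f : (Fin (n+1) → ZMod 2) → ZMod 2} {x : Fin (n+1) → ZMod 2}
    (h1 : TwoCyc f x) (h2 : TwoCyc f (x + 1)) :
    sdsMap f x = x + 1 ∧ sdsMap f (x+1) = x ∧ x ≠ x + 1 := by
  refine ⟨?_, ?_, ne_add_one x⟩
  · rw [master]
    intro i
    rw [mixN_pt, h1 i]
    simp
  · rw [master]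
    intro i
    rw [mixN_pt', h2 i]
    simp only [Pi.add_apply, Pi.one_apply]
    exact (zss (x i)).symm

/-- bridge forward -/
lemma bridge_fwd {f : (Fin (n+1) → ZMod 2) → ZMod 2} {x y : Fin (n+1) → ZMod 2}
    (hne : x ≠ y) (hxy : sdsMap f x = y) (hyx : sdsMap f y = x) :
    y = x + 1 ∧ TwoCyc f x ∧ TwoCyc f y := by
  rw [master] at hxy hyx
  have hcomp := complement hxy hyx hne
  have hyx1 : y = x + 1 := by
    funext j; rw [hcomp j]; simp
  refine ⟨hyx1, ?_, ?_⟩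
  · intro i
    rw [← mixN_pt, ← hyx1, ← hxy i, hcomp i]
  · intro i
    have hx1 : x = y + 1 := by rw [hyx1, add_one_add_one]
    have hm : mixN y x (i:ℕ) = pt y (i:ℕ) := by rw [hx1]; exact mixN_pt y _
    rw [← hm, ← hyx i, hx1]
    simp



def cw (x : Fin (n+1) → ZMod 2) : Fin n → ZMod 2 :=
  fun i => x i.castSucc + x i.succ

lemma cw_compl (x : Fin (n+1) → ZMod 2) : cw (x + 1) = cw x := by
  funext i
  simp only [cw, Pi.add_apply, Pi.one_apply]
  have : ∀ a b : ZMod 2, a + 1 + (b + 1) = a + b := by decide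
  exact this _ _

lemma cw_eq (z v : Fin (n+1) → ZMod 2) (h : cw z = cw v) : v = z ∨ v = z + 1 := by
  have const : ∀ (j : ℕ) (hj : j < n+1), v ⟨j, hj⟩ + z ⟨j, hj⟩ = v 0 + z 0 := by
    intro j
    induction j with
    | zero => intro hj; rfl
    | succ j ih =>
      intro hj
      have hjn : j < n := by omega
      have hstep := congrFun h ⟨j, hjn⟩
      simp only [cw] at hstep
      have hc : (⟨j, hjn⟩ : Fin n).castSucc = ⟨j, by omega⟩ := rfl
      have hs : (⟨j, hjn⟩ : Fin n).succ = ⟨j+1, hj⟩ := rfl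
      rw [hc, hs] at hstep
      have hswap : ∀ a b c d : ZMod 2, a + b = c + d → d + b = c + a := by decide
      have := hswap _ _ _ _ hstep
      rw [← ih (by omega)]
      -- this : v ⟨j+1⟩ + z ⟨j+1⟩ = v ⟨j⟩ + z ⟨j⟩
      exact this
  rcases zcases (v 0 + z 0) with h0 | h0
  · left
    funext j
    have := const (j : ℕ) j.isLt
    rw [show (⟨(j:ℕ), j.isLt⟩ : Fin (n+1)) = j from rfl, h0] at this
    have hz : ∀ a b : ZMod 2, a + b = 0 → a = b := by decide
    exact hz _ _ this
  · right
    funext j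
    have := const (j : ℕ) j.isLt
    rw [show (⟨(j:ℕ), j.isLt⟩ : Fin (n+1)) = j from rfl, h0] at this
    have hz : ∀ a b : ZMod 2, a + b = 1 → a = b + 1 := by decide
    simp only [Pi.add_apply, Pi.one_apply]
    exact hz _ _ this

def liftv (w : Fin n → ZMod 2) : Fin (n+1) → ZMod 2 :=
  fun j => ∑ i : Fin n, if (i : ℕ) < (j : ℕ) then w i else 0

lemma cw_liftv (w : Fin n → ZMod 2) : cw (liftv w) = w := by
  funext i
  simp only [cw, liftv, Fin.coe_castSucc, Fin.val_succ]
  rw [← Finset.sum_add_distrib]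
  have : ∀ t : Fin n, t ∈ Finset.univ →
      ((if (t:ℕ) < (i:ℕ) then w t else 0) + (if (t:ℕ) < (i:ℕ)+1 then w t else 0))
        = if t = i then w t else 0 := by
    intro t _
    by_cases h1 : (t:ℕ) < (i:ℕ)
    · rw [if_pos h1, if_pos (by omega), if_neg (by intro hc; subst hc; omega)]
      exact zadd_self _
    · by_cases h2 : t = i
      · subst h2
        rw [if_neg h1, if_pos (by omega), if_pos rfl, zero_add]
      · have : (t:ℕ) ≠ (i:ℕ) := fun hc => h2 (Fin.ext hc)
        rw [if_neg h1, if_neg (by omega), if_neg h2, zero_add]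
  rw [Finset.sum_congr rfl this, Finset.sum_ite_eq' Finset.univ i w,
    if_pos (Finset.mem_univ i)]

/-- two TwoCyc's whose difference is the indicator of [a, b) with b ≤ n give a contradiction -/
lemma conflict {f : (Fin (n+1) → ZMod 2) → ZMod 2} {z v : Fin (n+1) → ZMod 2}
    (hz : TwoCyc f z) (hv : TwoCyc f v) {a b : ℕ} (hab : a < b) (hb : b < n+1)
    (hvz : ∀ j : Fin (n+1), v j = z j + (if a ≤ (j:ℕ) ∧ (j:ℕ) < b then 1 else 0)) :
    False := by
  have ha : a < n+1 := by omega
  have e1 : pt v b = pt z a := by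
    funext j
    simp only [pt]
    rcases lt_or_ge (j:ℕ) a with hja | hja
    · rw [if_pos (by omega), if_pos hja, hvz j, if_neg (by omega), add_zero]
    · rcases lt_or_ge (j:ℕ) b with hjb | hjb
      · rw [if_pos hjb, if_neg (by omega), hvz j, if_pos (by omega), zss]
      · rw [if_neg (by omega), if_neg (by omega), hvz j, if_neg (by omega), add_zero]
  have e2 : pt v a = pt z b := by
    funext j
    simp only [pt]
    rcases lt_or_ge (j:ℕ) a with hja | hja
    · rw [if_pos hja, if_pos (by omega), hvz j, if_neg (by omega), add_zero]
    · rcases lt_or_ge (j:ℕ) b with hjb | hjb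
      · rw [if_neg (by omega), if_pos hjb, hvz j, if_pos (by omega)]
      · rw [if_neg (by omega), if_neg (by omega), hvz j, if_neg (by omega), add_zero]
  have hA := hz ⟨a, ha⟩
  have hB' := hv ⟨b, hb⟩
  have hA' := hv ⟨a, ha⟩
  have hB := hz ⟨b, hb⟩
  simp only [Fin.val_mk] at hA hB hA' hB'
  rw [e1] at hB'
  rw [e2] at hA'
  -- hA : f (pt z a) = z ⟨a⟩ + 1 ; hB' : f (pt z a) = v ⟨b⟩ + 1
  have hvb : v ⟨b, hb⟩ = z ⟨b, hb⟩ := by rw [hvz ⟨b, hb⟩, if_neg (by simp), add_zero]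
  have hva : v ⟨a, ha⟩ = z ⟨a, ha⟩ + 1 := by
    rw [hvz ⟨a, ha⟩, if_pos (by simp; omega)]
  have q1 : z ⟨a, ha⟩ + 1 = z ⟨b, hb⟩ + 1 := by rw [← hA, hB', hvb]
  have q2 : z ⟨b, hb⟩ + 1 = z ⟨a, ha⟩ + 1 + 1 := by rw [← hB, hA', hva]
  have : z ⟨a, ha⟩ = z ⟨b, hb⟩ := add_right_cancel q1
  rw [this] at q2
  exact absurd q2 (by
    have : ∀ c : ZMod 2, ¬ (c + 1 = c + 1 + 1) := by decide
    exact this _)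

lemma cw_ne_at {z v' : Fin (n+1) → ZMod 2} (d : Fin (n+1) → ZMod 2)
    (hd : ∀ j, v' j = z j + d j) (i : Fin n)
    (h1 : d i.castSucc + d i.succ = 1) : cw z i ≠ cw v' i := by
  simp only [cw]
  rw [hd i.castSucc, hd i.succ]
  intro h
  have haux : ∀ a b c e : ZMod 2, c + e = 1 → a + b = a + c + (b + e) → False := by decide
  exact haux _ _ _ _ h1 h

/-- the key distance lemma -/
lemma key {f : (Fin (n+1) → ZMod 2) → ZMod 2} {z v : Fin (n+1) → ZMod 2}
    (hz : TwoCyc f z) (hv : TwoCyc f v) (hv1 : TwoCyc f (v + 1))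
    (h1 : z ≠ v) (h2 : z ≠ v + 1) : 3 ≤ hammingDist (cw z) (cw v) := by
  set L : Fin (n+1) := ⟨n, by omega⟩ with hL
  set v' : Fin (n+1) → ZMod 2 := if v L = z L then v else v + 1 with hv'def
  have hv' : TwoCyc f v' := by rw [hv'def]; split <;> assumption
  have hzv' : z ≠ v' := by rw [hv'def]; split <;> assumption
  have hlast : v' L = z L := by
    rw [hv'def]; split
    · assumption
    · rename_i hne
      simp only [Pi.add_apply, Pi.one_apply]
      exact ((zne (v L) (z L)).mp hne).symm
  have hcw : cw v' = cw v := by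
    rw [hv'def]
    split
    · rfl
    · exact cw_compl v
  rw [← hcw]
  set d : Fin (n+1) → ZMod 2 := fun j => z j + v' j with hddef
  have hd : ∀ j, v' j = z j + d j := by
    intro j
    have : ∀ a b : ZMod 2, b = a + (a + b) := by decide
    exact this _ _
  have hdL : d L = 0 := by rw [hddef]; simp only []; rw [← hlast]; exact zadd_self _
  set T : Finset (Fin (n+1)) := Finset.univ.filter (fun j => d j = 1) with hT
  have hTne : T.Nonempty := by
    have : ∃ j, z j ≠ v' j := by
      by_contra hc
      push_neg at hc
      exact hzv' (funext hc)
    obtain ⟨j, hj⟩ := this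
    refine ⟨j, Finset.mem_filter.mpr ⟨Finset.mem_univ _, ?_⟩⟩
    rcases zcases (d j) with h | h
    · exfalso
      apply hj
      have := hd j
      rw [h, add_zero] at this
      exact this.symm
    · exact h
  set k := T.min' hTne with hk
  set g := T.max' hTne with hg
  have hdk : d k = 1 := (Finset.mem_filter.mp (T.min'_mem hTne)).2
  have hdg : d g = 1 := (Finset.mem_filter.mp (T.max'_mem hTne)).2
  have hmin : ∀ j : Fin (n+1), d j = 1 → (k:ℕ) ≤ (j:ℕ) := by
    intro j hj
    exact T.min'_le j (Finset.mem_filter.mpr ⟨Finset.mem_univ _, hj⟩)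
  have hmax : ∀ j : Fin (n+1), d j = 1 → (j:ℕ) ≤ (g:ℕ) := by
    intro j hj
    exact T.le_max' j (Finset.mem_filter.mpr ⟨Finset.mem_univ _, hj⟩)
  have hgn : (g:ℕ) < n := by
    have h1 : (g:ℕ) < n+1 := g.isLt
    have h2 : g ≠ L := by
      intro hc; rw [hc, hdL] at hdg; exact absurd hdg (by decide)
    have : (g:ℕ) ≠ n := fun hc => h2 (Fin.ext hc)
    omega
  have hkg : (k:ℕ) ≤ (g:ℕ) := hmax k hdk
  by_cases hA : ∀ j : Fin (n+1), (k:ℕ) ≤ (j:ℕ) → (j:ℕ) ≤ (g:ℕ) → d j = 1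
  · exfalso
    refine conflict hz hv' (a := (k:ℕ)) (b := (g:ℕ)+1) (by omega) (by omega) ?_
    intro j
    rw [hd j]
    congr 1
    by_cases hc : (k:ℕ) ≤ (j:ℕ) ∧ (j:ℕ) < (g:ℕ)+1
    · rw [if_pos hc]; exact hA j hc.1 (by omega)
    · rw [if_neg hc]
      rcases zcases (d j) with h | h
      · exact h
      · exfalso; exact hc ⟨hmin j h, by have := hmax j h; omega⟩
  · push_neg at hA
    obtain ⟨j0, hj0k, hj0g, hj0d⟩ := hA
    have hdj0 : d j0 = 0 := by rcases zcases (d j0) with h | h; exact h; exact absurd h hj0d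
    have hkj0 : (k:ℕ) < (j0:ℕ) := by
      rcases Nat.lt_or_ge (k:ℕ) (j0:ℕ) with h | h
      · exact h
      · exfalso
        have : (k:ℕ) = (j0:ℕ) := by omega
        have : k = j0 := Fin.ext this
        rw [← this, hdk] at hdj0; exact absurd hdj0 (by decide)
    have hj0g' : (j0:ℕ) < (g:ℕ) := by
      rcases Nat.lt_or_ge (j0:ℕ) (g:ℕ) with h | h
      · exact h
      · exfalso
        have : j0 = g := Fin.ext (by omega)
        rw [this, hdg] at hdj0; exact absurd hdj0 (by decide)
    set Ta : Finset (Fin (n+1)) := T.filter (fun t => (t:ℕ) < (j0:ℕ)) with hTa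
    have hTane : Ta.Nonempty :=
      ⟨k, Finset.mem_filter.mpr ⟨Finset.mem_filter.mpr ⟨Finset.mem_univ _, hdk⟩, hkj0⟩⟩
    set a := Ta.max' hTane with haa
    have haMem := Ta.max'_mem hTane
    have hda : d a = 1 := (Finset.mem_filter.mp ((Finset.mem_filter.mp haMem).1)).2
    have haj0 : (a:ℕ) < (j0:ℕ) := (Finset.mem_filter.mp haMem).2
    have hamax : ∀ t : Fin (n+1), d t = 1 → (t:ℕ) < (j0:ℕ) → (t:ℕ) ≤ (a:ℕ) := by
      intro t ht htj
      exact Ta.le_max' t (Finset.mem_filter.mpr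
        ⟨Finset.mem_filter.mpr ⟨Finset.mem_univ _, ht⟩, htj⟩)
    set Tb : Finset (Fin (n+1)) := T.filter (fun t => (j0:ℕ) < (t:ℕ)) with hTb
    have hTbne : Tb.Nonempty :=
      ⟨g, Finset.mem_filter.mpr ⟨Finset.mem_filter.mpr ⟨Finset.mem_univ _, hdg⟩, hj0g'⟩⟩
    set b := Tb.min' hTbne with hbb
    have hbMem := Tb.min'_mem hTbne
    have hdb : d b = 1 := (Finset.mem_filter.mp ((Finset.mem_filter.mp hbMem).1)).2
    have hj0b : (j0:ℕ) < (b:ℕ) := (Finset.mem_filter.mp hbMem).2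
    have hbmin : ∀ t : Fin (n+1), d t = 1 → (j0:ℕ) < (t:ℕ) → (b:ℕ) ≤ (t:ℕ) := by
      intro t ht htj
      exact Tb.min'_le t (Finset.mem_filter.mpr
        ⟨Finset.mem_filter.mpr ⟨Finset.mem_univ _, ht⟩, htj⟩)
    have hbg : (b:ℕ) ≤ (g:ℕ) := hmax b hdb
    -- the three positions
    have han : (a:ℕ) < n := by omega
    have hbn : (b:ℕ) - 1 < n := by omega
    set i1 : Fin n := ⟨(a:ℕ), han⟩ with hi1
    set i2 : Fin n := ⟨(b:ℕ)-1, hbn⟩ with hi2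
    set i3 : Fin n := ⟨(g:ℕ), hgn⟩ with hi3
    -- values of d at relevant points
    have hda1 : d ⟨(a:ℕ)+1, by omega⟩ = 0 := by
      rcases zcases (d ⟨(a:ℕ)+1, by omega⟩) with h | h
      · exact h
      · exfalso
        by_cases hc : (a:ℕ)+1 = (j0:ℕ)
        · have : (⟨(a:ℕ)+1, by omega⟩ : Fin (n+1)) = j0 := Fin.ext hc
          rw [this, hdj0] at h; exact absurd h (by decide)
        · have := hamax ⟨(a:ℕ)+1, by omega⟩ h (by simp only [Fin.val_mk]; omega)
          simp only [Fin.val_mk] at this; omega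
    have hdb1 : d ⟨(b:ℕ)-1, by omega⟩ = 0 := by
      rcases zcases (d ⟨(b:ℕ)-1, by omega⟩) with h | h
      · exact h
      · exfalso
        by_cases hc : (b:ℕ)-1 = (j0:ℕ)
        · have : (⟨(b:ℕ)-1, by omega⟩ : Fin (n+1)) = j0 := Fin.ext hc
          rw [this, hdj0] at h; exact absurd h (by decide)
        · have := hbmin ⟨(b:ℕ)-1, by omega⟩ h (by simp only [Fin.val_mk]; omega)
          simp only [Fin.val_mk] at this; omega
    have hdg1 : d ⟨(g:ℕ)+1, by omega⟩ = 0 := by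
      rcases zcases (d ⟨(g:ℕ)+1, by omega⟩) with h | h
      · exact h
      · exfalso
        have := hmax ⟨(g:ℕ)+1, by omega⟩ h
        simp only [Fin.val_mk] at this; omega
    -- cast facts
    have hcs : ∀ (p : ℕ) (hp : p < n), (⟨p, hp⟩ : Fin n).castSucc = ⟨p, by omega⟩ := by
      intro p hp; rfl
    have hsc : ∀ (p : ℕ) (hp : p < n), (⟨p, hp⟩ : Fin n).succ = ⟨p+1, by omega⟩ := by
      intro p hp; rfl
    have hne1 : cw z i1 ≠ cw v' i1 := by
      apply cw_ne_at d hd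
      rw [hi1, hcs, hsc]
      have ha' : (⟨(a:ℕ), by omega⟩ : Fin (n+1)) = a := Fin.ext rfl
      rw [ha', hda, hda1]
      decide
    have hne2 : cw z i2 ≠ cw v' i2 := by
      apply cw_ne_at d hd
      rw [hi2, hcs, hsc]
      have hb' : (⟨(b:ℕ)-1+1, by omega⟩ : Fin (n+1)) = b := Fin.ext (by simp only [Fin.val_mk]; omega)
      rw [hb', hdb, hdb1]
      decide
    have hne3 : cw z i3 ≠ cw v' i3 := by
      apply cw_ne_at d hd
      rw [hi3, hcs, hsc]
      have hg' : (⟨(g:ℕ), by omega⟩ : Fin (n+1)) = g := Fin.ext rfl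
      rw [hg', hdg, hdg1]
      decide
    -- count
    have hdist : hammingDist (cw z) (cw v')
        = (Finset.univ.filter fun i => cw z i ≠ cw v' i).card := rfl
    rw [hdist]
    have hsub : ({i1, i2, i3} : Finset (Fin n)) ⊆
        Finset.univ.filter (fun i => cw z i ≠ cw v' i) := by
      intro t ht
      simp only [Finset.mem_insert, Finset.mem_singleton] at ht
      rcases ht with h | h | h <;> subst h <;>
        exact Finset.mem_filter.mpr ⟨Finset.mem_univ _, by assumption⟩
    have h12 : i1 ≠ i2 := by
      intro hc
      have := congrArg Fin.val hc
      simp only [hi1, hi2, Fin.val_mk] at this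
      omega
    have h13 : i1 ≠ i3 := by
      intro hc
      have := congrArg Fin.val hc
      simp only [hi1, hi3, Fin.val_mk] at this
      omega
    have h23 : i2 ≠ i3 := by
      intro hc
      have := congrArg Fin.val hc
      simp only [hi2, hi3, Fin.val_mk] at this
      omega
    have hcard : ({i1, i2, i3} : Finset (Fin n)).card = 3 := by
      rw [Finset.card_insert_of_notMem (by simp [h12, h13]),
        Finset.card_insert_of_notMem (by simp [h23]), Finset.card_singleton]
    rw [← hcard]
    exact Finset.card_le_card hsub




/-- if two codeword-lifts differ by an interval indicator with right end ≤ n,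
their codewords are within distance 2; contradiction with the code property -/
lemma Wsub {C : Finset (Fin n → ZMod 2)}
    (hC : ∀ x ∈ C, ∀ y ∈ C, x ≠ y → 3 ≤ hammingDist x y)
    {z v : Fin (n+1) → ZMod 2} (hz : cw z ∈ C) (hv : cw v ∈ C)
    {k k' : ℕ} (hkk : k < k') (hk' : k' < n+1)
    (hvz : ∀ j : Fin (n+1), v j = z j + (if k ≤ (j:ℕ) ∧ (j:ℕ) < k' then 1 else 0)) :
    False := by
  have hclaim : ∀ i : Fin n, cw z i ≠ cw v i → ((i:ℕ)+1 = k ∨ (i:ℕ)+1 = k') := by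
    intro i hi
    by_contra hc
    push_neg at hc
    apply hi
    simp only [cw]
    rw [hvz i.castSucc, hvz i.succ]
    have hcv : (i.castSucc : ℕ) = (i:ℕ) := rfl
    have hsv : (i.succ : ℕ) = (i:ℕ)+1 := rfl
    rw [hcv, hsv]
    have hiff : (k ≤ (i:ℕ) ∧ (i:ℕ) < k') ↔ (k ≤ (i:ℕ)+1 ∧ (i:ℕ)+1 < k') := by
      constructor <;> intro h <;> omega
    by_cases hcond : k ≤ (i:ℕ) ∧ (i:ℕ) < k'
    · rw [if_pos hcond, if_pos (hiff.mp hcond)]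
      have : ∀ a b : ZMod 2, a + b = a + 1 + (b + 1) := by decide
      exact this _ _
    · rw [if_neg hcond, if_neg (fun h => hcond (hiff.mpr h)), add_zero, add_zero]
  -- distance ≤ 2
  have hk'pos : 1 ≤ k' := by omega
  have hB2 : k' - 1 < n := by omega
  set B2 : Fin n := ⟨k'-1, hB2⟩ with hB2def
  set B1 : Fin n := if h : k = 0 then B2 else ⟨k-1, by omega⟩ with hB1def
  have hsub : (Finset.univ.filter fun i => cw z i ≠ cw v i) ⊆ {B1, B2} := by
    intro t ht
    have := hclaim t (Finset.mem_filter.mp ht).2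
    simp only [Finset.mem_insert, Finset.mem_singleton]
    rcases this with h | h
    · left
      rw [hB1def, dif_neg (by omega)]
      exact Fin.ext (by simp only [Fin.val_mk]; omega)
    · right
      exact Fin.ext (by simp only [hB2def, Fin.val_mk]; omega)
  have hdle : hammingDist (cw z) (cw v) ≤ 2 := by
    have h1 : hammingDist (cw z) (cw v)
        = (Finset.univ.filter fun i => cw z i ≠ cw v i).card := rfl
    rw [h1]
    calc (Finset.univ.filter fun i => cw z i ≠ cw v i).card
        ≤ ({B1, B2} : Finset (Fin n)).card := Finset.card_le_card hsub
      _ ≤ 2 := by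
          apply le_trans (Finset.card_insert_le _ _)
          simp
  have hcweq : cw z = cw v := by
    by_contra hne
    have := hC _ hz _ hv hne
    omega
  rcases cw_eq z v hcweq with h | h
  · -- v = z but they differ at position k
    have hkn : k < n+1 := by omega
    have := hvz ⟨k, hkn⟩
    rw [h, if_pos (by simp only [Fin.val_mk]; omega)] at this
    have habs : ∀ a : ZMod 2, ¬ (a = a + 1) := by decide
    exact habs _ this
  · -- v = z + 1 but they agree at position k'
    have := hvz ⟨k', hk'⟩
    rw [h, if_neg (by simp only [Fin.val_mk]; omega), add_zero] at this
    simp only [Pi.add_apply, Pi.one_apply] at this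
    have habs : ∀ a : ZMod 2, ¬ (a + 1 = a) := by decide
    exact habs _ this

lemma W {C : Finset (Fin n → ZMod 2)}
    (hC : ∀ x ∈ C, ∀ y ∈ C, x ≠ y → 3 ≤ hammingDist x y)
    {z v : Fin (n+1) → ZMod 2} (hz : cw z ∈ C) (hv : cw v ∈ C)
    (k k' : Fin (n+1)) (hpt : pt z (k:ℕ) = pt v (k':ℕ)) :
    z = v ∧ k = k' := by
  have hvz : ∀ j : Fin (n+1), v j = z j +
      ((if (j:ℕ) < (k:ℕ) then 1 else 0) + (if (j:ℕ) < (k':ℕ) then 1 else 0)) := by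
    intro j
    have := congrFun hpt j
    simp only [pt] at this
    by_cases h1 : (j:ℕ) < (k:ℕ) <;> by_cases h2 : (j:ℕ) < (k':ℕ)
    · rw [if_pos h1, if_pos h2] at this ⊢
      have haux : ∀ a b : ZMod 2, a + 1 = b + 1 → b = a + (1 + 1) := by decide
      exact haux _ _ this
    · rw [if_pos h1, if_neg h2] at this ⊢
      rw [← this, add_zero]
    · rw [if_neg h1, if_pos h2] at this ⊢
      have haux : ∀ a b : ZMod 2, a = b + 1 → b = a + (0 + 1) := by decide
      exact haux _ _ this
    · rw [if_neg h1, if_neg h2] at this ⊢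
      rw [← this, add_zero, add_zero]
  rcases Nat.lt_trichotomy (k:ℕ) (k':ℕ) with h | h | h
  · exfalso
    refine Wsub hC hz hv (k := (k:ℕ)) (k' := (k':ℕ)) h k'.isLt ?_
    intro j
    rw [hvz j]
    congr 1
    by_cases h1 : (j:ℕ) < (k:ℕ) <;> by_cases h2 : (j:ℕ) < (k':ℕ)
    · rw [if_pos h1, if_pos h2, if_neg (by omega)]; decide
    · omega
    · rw [if_neg h1, if_pos h2, if_pos (by omega)]; decide
    · rw [if_neg h1, if_neg h2, if_neg (by omega)]; decide
  · have hk : k = k' := Fin.ext h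
    subst hk
    constructor
    · funext j
      have := hvz j
      by_cases h1 : (j:ℕ) < (k:ℕ)
      · rw [if_pos h1] at this
        rw [this]
        have h3 : ∀ a : ZMod 2, a + (1+1) = a := by decide
        rw [h3]
      · rw [if_neg h1] at this
        rw [this]
        have h3 : ∀ a : ZMod 2, a + (0+0) = a := by decide
        rw [h3]
    · rfl
  · exfalso
    refine Wsub hC hv hz (k := (k':ℕ)) (k' := (k:ℕ)) h k.isLt ?_
    intro j
    have := hvz j
    have haux : ∀ a b c : ZMod 2, b = a + c → a = b + c := by decide
    have h2 := haux _ _ _ this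
    rw [h2]
    congr 1
    by_cases h1 : (j:ℕ) < (k:ℕ) <;> by_cases h3 : (j:ℕ) < (k':ℕ)
    · rw [if_pos h1, if_pos h3, if_neg (by omega)]; decide
    · rw [if_pos h1, if_neg h3, if_pos (by omega)]; decide
    · omega
    · rw [if_neg h1, if_neg h3, if_neg (by omega)]; decide

open Classical in
noncomputable def consF (C : Finset (Fin n → ZMod 2)) :
    (Fin (n+1) → ZMod 2) → ZMod 2 := fun p =>
  if h : ∃ q : (Fin (n+1) → ZMod 2) × Fin (n+1), cw q.1 ∈ C ∧ pt q.1 (q.2:ℕ) = p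
  then h.choose.1 h.choose.2 + 1 else 0

lemma consF_spec {C : Finset (Fin n → ZMod 2)}
    (hC : ∀ x ∈ C, ∀ y ∈ C, x ≠ y → 3 ≤ hammingDist x y)
    {z : Fin (n+1) → ZMod 2} (hz : cw z ∈ C) : TwoCyc (consF C) z := by
  intro i
  have hex : ∃ q : (Fin (n+1) → ZMod 2) × Fin (n+1),
      cw q.1 ∈ C ∧ pt q.1 (q.2:ℕ) = pt z (i:ℕ) := ⟨(z, i), hz, rfl⟩
  simp only [consF]
  rw [dif_pos hex]
  obtain ⟨hq1, hq2⟩ := hex.choose_spec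
  obtain ⟨hzz, hkk⟩ := W hC hq1 hz _ _ hq2
  rw [hzz, hkk]



variable {n : ℕ}

def Scyc (f : (Fin (n+1) → ZMod 2) → ZMod 2) : Set (Sym2 (Fin (n+1) → ZMod 2)) :=
  {p | ∃ x y, p = s(x, y) ∧ x ≠ y ∧ sdsMap f x = y ∧ sdsMap f y = x}

def Rcyc (f : (Fin (n+1) → ZMod 2) → ZMod 2) : Set (Fin (n+1) → ZMod 2) :=
  {x | x 0 = 0 ∧ TwoCyc f x ∧ TwoCyc f (x+1)}

lemma S_eq (f : (Fin (n+1) → ZMod 2) → ZMod 2) :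
    Scyc f = (fun x => s(x, x+1)) '' Rcyc f := by
  ext p
  constructor
  · rintro ⟨x, y, hp, hne, hxy, hyx⟩
    obtain ⟨hy1, tcx, tcy⟩ := bridge_fwd hne hxy hyx
    subst hy1
    rcases zcases (x 0) with h0 | h0
    · exact ⟨x, ⟨h0, tcx, tcy⟩, hp.symm⟩
    · refine ⟨x + 1, ⟨?_, tcy, ?_⟩, ?_⟩
      · simp only [Pi.add_apply, Pi.one_apply, h0]; decide
      · rw [add_one_add_one]; exact tcx
      · show s(x + 1, x + 1 + 1) = p
        rw [add_one_add_one, hp]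
        exact Sym2.eq_swap
  · rintro ⟨x, ⟨h0, t1, t2⟩, rfl⟩
    obtain ⟨hxy, hyx, hne⟩ := bridge_back t1 t2
    exact ⟨x, x + 1, rfl, hne, hxy, hyx⟩

lemma R_pair_inj (f : (Fin (n+1) → ZMod 2) → ZMod 2) :
    Set.InjOn (fun x => s(x, x+1)) (Rcyc f) := by
  intro x hx w hw h
  simp only [Sym2.eq_iff] at h
  rcases h with ⟨h1, _⟩ | ⟨h1, _⟩
  · exact h1
  · exfalso
    have := congrFun h1 0
    rw [hx.1] at this
    simp only [Pi.add_apply, Pi.one_apply, hw.1] at this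
    exact absurd this (by decide)

lemma cw_injOn_R (f : (Fin (n+1) → ZMod 2) → ZMod 2) :
    Set.InjOn cw (Rcyc f) := by
  intro x hx w hw h
  rcases cw_eq x w h with h1 | h1
  · exact h1.symm
  · exfalso
    have := congrFun h1 0
    rw [hw.1] at this
    simp only [Pi.add_apply, Pi.one_apply, hx.1] at this
    exact absurd this (by decide)

lemma num_eq (f : (Fin (n+1) → ZMod 2) → ZMod 2) :
    numTwoCycles f = (cw '' Rcyc f).ncard := by
  have h0 : numTwoCycles f = (Scyc f).ncard := rfl
  rw [h0, S_eq, Set.ncard_image_of_injOn (R_pair_inj f),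
    Set.ncard_image_of_injOn (cw_injOn_R f)]

/-- upper bound: every count of 2-cycles is a valid code size -/
lemma upper (f : (Fin (n+1) → ZMod 2) → ZMod 2) :
    ∃ C : Finset (Fin n → ZMod 2),
      (∀ x ∈ C, ∀ y ∈ C, x ≠ y → 3 ≤ hammingDist x y) ∧ C.card = numTwoCycles f := by
  have hfin : (cw '' Rcyc f).Finite := Set.toFinite _
  refine ⟨hfin.toFinset, ?_, ?_⟩
  · intro a ha b hb hab
    rw [Set.Finite.mem_toFinset] at ha hb
    obtain ⟨x, hx, rfl⟩ := ha
    obtain ⟨w, hw, rfl⟩ := hb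
    refine key hx.2.1 hw.2.1 hw.2.2 ?_ ?_
    · intro hc; subst hc; exact hab rfl
    · intro hc
      apply hab
      rw [hc, cw_compl]
  · rw [num_eq f]
    exact (Set.ncard_eq_toFinset_card _ hfin).symm

/-- lower bound: from a code we build `f` with at least `C.card` 2-cycles -/
lemma lower (C : Finset (Fin n → ZMod 2))
    (hC : ∀ x ∈ C, ∀ y ∈ C, x ≠ y → 3 ≤ hammingDist x y) :
    C.card ≤ numTwoCycles (consF C) := by
  set f := consF C with hf
  set g : (Fin n → ZMod 2) → Sym2 (Fin (n+1) → ZMod 2) :=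
    fun w => s(liftv w, liftv w + 1) with hg
  have himg : g '' ↑C ⊆ Scyc f := by
    rintro p ⟨w, hw, rfl⟩
    have t1 : TwoCyc f (liftv w) := consF_spec hC (by rw [cw_liftv]; exact hw)
    have t2 : TwoCyc f (liftv w + 1) := consF_spec hC (by rw [cw_compl, cw_liftv]; exact hw)
    obtain ⟨hxy, hyx, hne⟩ := bridge_back t1 t2
    exact ⟨liftv w, liftv w + 1, rfl, hne, hxy, hyx⟩
  have ginj : Set.InjOn g ↑C := by
    intro w hw w' hw' h
    simp only [hg, Sym2.eq_iff] at h
    rcases h with ⟨h1, _⟩ | ⟨h1, _⟩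
    · have := congrArg cw h1
      rwa [cw_liftv, cw_liftv] at this
    · have := congrArg cw h1
      rwa [cw_liftv, cw_compl, cw_liftv] at this
  have h1 : (↑C : Set (Fin n → ZMod 2)).ncard = (g '' ↑C).ncard :=
    (Set.ncard_image_of_injOn ginj).symm
  have h2 : (g '' ↑C).ncard ≤ (Scyc f).ncard :=
    Set.ncard_le_ncard himg (Set.toFinite _)
  have h3 : numTwoCycles f = (Scyc f).ncard := rfl
  rw [← Set.ncard_coe_finset, h1, h3]
  exact h2

end Stmt10Aux

theorem stmt10 (n : ℕ) (hn : 1 ≤ n) :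
    ∃ m : ℕ,
      IsGreatest {k : ℕ | ∃ f : (Fin (n + 1) → ZMod 2) → ZMod 2,
        numTwoCycles f = k} m ∧
      IsGreatest {k : ℕ | ∃ C : Finset (Fin n → ZMod 2),
        (∀ x ∈ C, ∀ y ∈ C, x ≠ y → 3 ≤ hammingDist x y) ∧ C.card = k} m := by
  classical
  set codeS : Set ℕ := {k : ℕ | ∃ C : Finset (Fin n → ZMod 2),
    (∀ x ∈ C, ∀ y ∈ C, x ≠ y → 3 ≤ hammingDist x y) ∧ C.card = k} with hcodeS
  have hne : codeS.Nonempty := ⟨0, ∅, by intro x hx; exact absurd hx (by simp), rfl⟩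
  have hbdd : BddAbove codeS := by
    refine ⟨(Finset.univ : Finset (Fin n → ZMod 2)).card, ?_⟩
    rintro k ⟨C, _, rfl⟩
    exact Finset.card_le_univ C
  have hK := Nat.sSup_mem hne hbdd
  set K := sSup codeS with hKdef
  have hKub : ∀ k ∈ codeS, k ≤ K := fun k hk => le_csSup hbdd hk
  obtain ⟨C0, hC0, hC0card⟩ := hK
  refine ⟨K, ⟨⟨Stmt10Aux.consF C0, ?_⟩, ?_⟩, ⟨⟨C0, hC0, hC0card⟩, ?_⟩⟩
  · apply le_antisymm
    · exact hKub _ (Stmt10Aux.upper _)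
    · rw [← hC0card]
      exact Stmt10Aux.lower C0 hC0
  · rintro k ⟨f, rfl⟩
    exact hKub _ (Stmt10Aux.upper f)
  · rintro k ⟨C, hC, rfl⟩
    exact hKub _ ⟨C, hC, rfl⟩
end

section
/- Let n ≥ 2 and let F be the SDS map over K_n with common vertex function f : 𝔽₂ⁿ → 𝔽₂ and an arbitrary update order π ∈ S_n (F = L_{v_{π(n)}} ∘ ⋯ ∘ L_{v_{π(1)}}). If x is a periodic point of period 2 of F and z = F(x), then x and z differ in every coordinate: x_k ≠ z_k for all k ∈ {1,…,n}. -/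
/-- The SDS map over `K n` with update order `π`. -/
def sdsMapPerm {n : ℕ} (f : (Fin n → ZMod 2) → ZMod 2) (π : Equiv.Perm (Fin n))
    (x : Fin n → ZMod 2) : Fin n → ZMod 2 :=
  (List.finRange n).foldl (fun v i => Function.update v (π i) (f v)) x


def sdsG {n : ℕ} (f : (Fin n → ZMod 2) → ZMod 2) (l : List (Fin n))
    (x : Fin n → ZMod 2) : Fin n → ZMod 2 :=
  l.foldl (fun v i => Function.update v i (f v)) x

lemma sdsG_cons {n : ℕ} (f : (Fin n → ZMod 2) → ZMod 2) (c : Fin n) (t : List (Fin n))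
    (x : Fin n → ZMod 2) :
    sdsG f (c :: t) x = sdsG f t (Function.update x c (f x)) := rfl

lemma sdsG_append {n : ℕ} (f : (Fin n → ZMod 2) → ZMod 2) (l₁ l₂ : List (Fin n))
    (x : Fin n → ZMod 2) :
    sdsG f (l₁ ++ l₂) x = sdsG f l₂ (sdsG f l₁ x) := List.foldl_append

lemma sdsG_notmem {n : ℕ} (f : (Fin n → ZMod 2) → ZMod 2) {l : List (Fin n)}
    {p : Fin n} (h : p ∉ l) (x : Fin n → ZMod 2) : sdsG f l x p = x p := by
  induction l generalizing x with
  | nil => rfl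
  | cons c t ih =>
    simp only [List.mem_cons, not_or] at h
    rw [sdsG_cons, ih h.2, Function.update_of_ne h.1]

lemma fx_ne {n : ℕ} (f : (Fin n → ZMod 2) → ZMod 2) (l : List (Fin n)) (hnd : l.Nodup)
    (x : Fin n → ZMod 2) (h2 : sdsG f l (sdsG f l x) = x) (h1 : sdsG f l x ≠ x) :
    f x ≠ f (sdsG f l x) := by
  induction l generalizing x with
  | nil => exact absurd h2 h1
  | cons c t ih =>
    intro hf
    set z := sdsG f (c :: t) x with hzdef
    have hct : c ∉ t := (List.nodup_cons.mp hnd).1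
    have hzc : z c = f x := by
      rw [hzdef, sdsG_cons, sdsG_notmem f hct, Function.update_self]
    have hxc : x c = f z := by
      conv_lhs => rw [← h2]
      rw [sdsG_cons, sdsG_notmem f hct, Function.update_self]
    have hcc : x c = z c := by rw [hzc, hxc, hf]
    have hz : z = sdsG f t x := by
      rw [hzdef, sdsG_cons]
      rw [show f x = x c by rw [hcc, hzc], Function.update_eq_self]
    have hx : x = sdsG f t z := by
      conv_lhs => rw [← h2]
      rw [sdsG_cons]
      rw [show f z = z c from hxc ▸ hcc ▸ rfl, Function.update_eq_self]
    have := ih (List.nodup_cons.mp hnd).2 x (by rw [← hz, ← hx]) (by rw [← hz]; exact h1)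
    rw [← hz] at this
    exact this hf

lemma main_lemma {n : ℕ} (f : (Fin n → ZMod 2) → ZMod 2) (k : ℕ) :
    ∀ (l : List (Fin n)), l.Nodup → ∀ x, sdsG f l (sdsG f l x) = x →
    sdsG f l x ≠ x → ∀ p rest, l.drop k = p :: rest → sdsG f l x p ≠ x p := by
  induction k with
  | zero =>
    intro l hnd x h2 h1 p rest hdrop
    rw [List.drop_zero] at hdrop
    subst hdrop
    have hpr : p ∉ rest := (List.nodup_cons.mp hnd).1
    have hzp : sdsG f (p :: rest) x p = f x := by
      rw [sdsG_cons, sdsG_notmem f hpr, Function.update_self]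
    have hxp : x p = f (sdsG f (p :: rest) x) := by
      conv_lhs => rw [← h2]
      rw [sdsG_cons, sdsG_notmem f hpr, Function.update_self]
    rw [hzp, hxp]
    exact fx_ne f _ hnd x h2 h1
  | succ k ih =>
    intro l hnd x h2 h1 p rest hdrop
    match l with
    | [] => simp at hdrop
    | c :: t =>
      have hct : c ∉ t := (List.nodup_cons.mp hnd).1
      have htd : t.drop k = p :: rest := hdrop
      set z := sdsG f (c :: t) x with hzdef
      set x' := Function.update x c (f x) with hx'def
      set z' := Function.update z c (f z) with hz'def
      have hz : z = sdsG f t x' := rfl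
      have hx : x = sdsG f t z' := by rw [← h2]; rfl
      have hGx' : sdsG f (t ++ [c]) x' = z' := by
        rw [sdsG_append, ← hz]; rfl
      have hGz' : sdsG f (t ++ [c]) z' = x' := by
        rw [sdsG_append, ← hx]; rfl
      have hnd' : (t ++ [c]).Nodup := by
        simp [List.nodup_append, (List.nodup_cons.mp hnd).2]
        intro a ha hac; subst hac; exact hct ha
      -- key coordinate facts
      have hzc : z c = f x := by
        rw [hz, sdsG_notmem f hct, hx'def, Function.update_self]
      have hxc : x c = f z := by
        rw [hx, sdsG_notmem f hct, hz'def, Function.update_self]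
      have hne' : sdsG f (t ++ [c]) x' ≠ x' := by
        rw [hGx']
        intro he
        apply h1
        funext q
        by_cases hq : q = c
        · subst hq
          have e1 : x q = z' q := by rw [hz'def, Function.update_self, hxc]
          have e2 : z q = x' q := by rw [hx'def, Function.update_self, hzc]
          rw [e2, ← he, ← e1]
        · have hcq := congrFun he q
          rw [hz'def, hx'def, Function.update_of_ne hq, Function.update_of_ne hq] at hcq
          exact hcq
      have h2' : sdsG f (t ++ [c]) (sdsG f (t ++ [c]) x') = x' := by
        rw [hGx', hGz']
      have hdrop' : (t ++ [c]).drop k = p :: (rest ++ [c]) := by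
        rw [List.drop_append_of_le_length, htd]; rfl
        · have : k < t.length := by
            by_contra hk
            push_neg at hk
            rw [List.drop_eq_nil_of_le hk] at htd
            simp at htd
          omega
      have := ih (t ++ [c]) hnd' x' h2' hne' p (rest ++ [c]) hdrop'
      rw [hGx'] at this
      have hpc : p ≠ c := by
        intro he
        apply hct
        rw [← he]
        exact List.mem_of_mem_drop (htd ▸ (List.mem_cons_self : p ∈ p :: rest))
      rw [hz'def, hx'def, Function.update_of_ne hpc, Function.update_of_ne hpc] at this
      exact this

theorem stmt11 (n : ℕ) (hn : 2 ≤ n) (f : (Fin n → ZMod 2) → ZMod 2)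
    (π : Equiv.Perm (Fin n)) (x : Fin n → ZMod 2)
    (h2 : sdsMapPerm f π (sdsMapPerm f π x) = x)
    (h1 : sdsMapPerm f π x ≠ x) :
    ∀ k : Fin n, sdsMapPerm f π x k ≠ x k := by
  intro k
  have hl : ∀ y, sdsMapPerm f π y = sdsG f ((List.finRange n).map π) y := by
    intro y
    rw [sdsG, List.foldl_map]
    rfl
  set l := (List.finRange n).map π with hldef
  have hnd : l.Nodup := (List.nodup_finRange n).map π.injective
  have hmem : k ∈ l := by
    rw [hldef, List.mem_map]
    exact ⟨π.symm k, List.mem_finRange _, by simp⟩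
  obtain ⟨i, hi, hgi⟩ := List.mem_iff_getElem.mp hmem
  have hdrop : l.drop i = k :: l.drop (i + 1) := by
    rw [List.drop_eq_getElem_cons hi, hgi]
  rw [hl, hl] at h2
  rw [hl] at h1 ⊢
  exact main_lemma f i l hnd x h2 h1 k _ hdrop
end

section
/- Let n ≥ 2, let f : 𝔽₂ⁿ → 𝔽₂, and let F = L_{v_n} ∘ ⋯ ∘ L_{v_1} and G_ℓ = L_{v_ℓ} ∘ ⋯ ∘ L_{v_1} for 0 ≤ ℓ ≤ n (G₀ = identity). If x = (a₁,…,aₙ) is a periodic point of period 2 of F, then for every ℓ ∈ {0,1,…,n}, G_ℓ(x) = (ā₁,…,ā_ℓ, a_{ℓ+1},…,aₙ), i.e., the intermediate state after updating the first ℓ vertices is obtained from x by complementing exactly the first ℓ coordinates. -/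
/-- The intermediate SDS map `G_ℓ`, updating only the first `ℓ` vertices. -/
def sdsPartial {n : ℕ} (f : (Fin n → ZMod 2) → ZMod 2) (ℓ : ℕ)
    (x : Fin n → ZMod 2) : Fin n → ZMod 2 :=
  ((List.finRange n).take ℓ).foldl (fun v i => Function.update v i (f v)) x

lemma sdsPartial_succ {n : ℕ} (f : (Fin n → ZMod 2) → ZMod 2) (y : Fin n → ZMod 2)
    (ℓ : ℕ) (h : ℓ < n) :
    sdsPartial f (ℓ+1) y =
      Function.update (sdsPartial f ℓ y) ⟨ℓ, h⟩ (f (sdsPartial f ℓ y)) := by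
  unfold sdsPartial
  rw [List.take_succ]
  have h' : ℓ < (List.finRange n).length := by simpa using h
  rw [List.getElem?_eq_getElem h']
  simp [List.foldl_append, List.getElem_finRange]

lemma sdsPartial_apply {n : ℕ} (f : (Fin n → ZMod 2) → ZMod 2) (y : Fin n → ZMod 2) :
    ∀ ℓ : ℕ, ℓ ≤ n → ∀ j : Fin n,
      sdsPartial f ℓ y j =
        if (j : ℕ) < ℓ then f (sdsPartial f (j : ℕ) y) else y j := by
  intro ℓ
  induction ℓ with
  | zero => intro _ j; simp [sdsPartial]
  | succ ℓ ih =>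
    intro h j
    have hℓn : ℓ < n := h
    rw [sdsPartial_succ f y ℓ hℓn, Function.update_apply]
    by_cases hj : j = ⟨ℓ, hℓn⟩
    · subst hj
      simp
    · rw [if_neg hj, ih (le_of_lt h) j]
      have hne : (j : ℕ) ≠ ℓ := by
        intro hc
        exact hj (Fin.ext hc)
      by_cases hlt : (j : ℕ) < ℓ
      · rw [if_pos hlt, if_pos (by omega)]
      · rw [if_neg hlt, if_neg (by omega)]

lemma sdsMap_eq_partial {n : ℕ} (f : (Fin n → ZMod 2) → ZMod 2) (y : Fin n → ZMod 2) :
    sdsMap f y = sdsPartial f n y := by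
  unfold sdsMap sdsPartial
  rw [List.take_of_length_le (by simp)]

/-- Abstract core lemma: every coordinate flips. -/
lemma flip_all {n : ℕ} (f : (Fin n → ZMod 2) → ZMod 2) (x b : Fin n → ZMod 2)
    (hb : ∀ ℓ : Fin n, b ℓ = f (fun m => if (m : ℕ) < (ℓ : ℕ) then b m else x m))
    (hx : ∀ ℓ : Fin n, x ℓ = f (fun m => if (m : ℕ) < (ℓ : ℕ) then x m else b m))
    (hne : b ≠ x) (k : Fin n) : b k ≠ x k := by
  intro hk
  by_cases hcase : ∃ j : Fin n, k < j ∧ b j ≠ x j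
  · -- minimal flip index above k
    set T := Finset.univ.filter (fun j : Fin n => k < j ∧ b j ≠ x j) with hT
    have hTne : T.Nonempty := by
      obtain ⟨j, hj1, hj2⟩ := hcase
      exact ⟨j, by simp [hT, hj1, hj2]⟩
    set j := T.min' hTne with hjdef
    have hjmem : k < j ∧ b j ≠ x j := by
      exact (Finset.mem_filter.mp (T.min'_mem hTne)).2
    have hmin : ∀ i : Fin n, k < i → b i ≠ x i → j ≤ i := by
      intro i h1 h2
      exact T.min'_le i (by simp [hT, h1, h2])
    have hbet : ∀ m : Fin n, k ≤ m → m < j → b m = x m := by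
      intro m h1 h2
      rcases eq_or_lt_of_le h1 with h1 | h1
      · rw [← h1]; exact hk
      · by_contra hne'
        exact absurd (hmin m h1 hne') (not_le.mpr h2)
    have hs : (fun m : Fin n => if (m : ℕ) < (j : ℕ) then b m else x m) =
        (fun m : Fin n => if (m : ℕ) < (k : ℕ) then b m else x m) := by
      funext m
      split_ifs with h1 h2 h2
      · rfl
      · exact hbet m (not_lt.mp h2) h1
      · exact absurd (h2.trans hjmem.1) h1
      · rfl
    have ht : (fun m : Fin n => if (m : ℕ) < (j : ℕ) then x m else b m) =
        (fun m : Fin n => if (m : ℕ) < (k : ℕ) then x m else b m) := by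
      funext m
      split_ifs with h1 h2 h2
      · rfl
      · exact (hbet m (not_lt.mp h2) h1).symm
      · exact absurd (h2.trans hjmem.1) h1
      · rfl
    have e1 : b j = b k := by rw [hb j, hb k, hs]
    have e2 : x j = x k := by rw [hx j, hx k, ht]
    exact hjmem.2 (by rw [e1, e2, hk])
  · push_neg at hcase
    have hall : ∀ m : Fin n, k ≤ m → b m = x m := by
      intro m hm
      rcases eq_or_lt_of_le hm with hm | hm
      · rw [← hm]; exact hk
      · exact hcase m hm
    -- minimal global flip index
    set S := Finset.univ.filter (fun j : Fin n => b j ≠ x j) with hS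
    have hSne : S.Nonempty := by
      obtain ⟨j, hj⟩ := Function.ne_iff.mp hne
      exact ⟨j, by simp [hS, hj]⟩
    set j := S.min' hSne with hjdef
    have hjmem : b j ≠ x j := by
      exact (Finset.mem_filter.mp (S.min'_mem hSne)).2
    have hlow : ∀ m : Fin n, m < j → b m = x m := by
      intro m hm
      by_contra hne'
      exact absurd (S.min'_le m (by simp [hS, hne'])) (not_le.mpr hm)
    have e1 : b j = x k := by
      rw [hb j, hx k]
      congr 1
      funext m
      split_ifs with h1 h2 h2
      · exact hlow m h1
      · rfl
      · rfl
      · exact (hall m (not_lt.mp h2)).symm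
    have e2 : b k = x j := by
      rw [hb k, hx j]
      congr 1
      funext m
      split_ifs with h1 h2 h2
      · exact hlow m h2
      · rfl
      · rfl
      · exact (hall m (not_lt.mp h1)).symm
    exact hjmem (by rw [e1, ← hk, e2])

theorem stmt14 (n : ℕ) (hn : 2 ≤ n) (f : (Fin n → ZMod 2) → ZMod 2)
    (x : Fin n → ZMod 2)
    (h2 : sdsMap f (sdsMap f x) = x) (h1 : sdsMap f x ≠ x) :
    ∀ ℓ : ℕ, ℓ ≤ n →
      sdsPartial f ℓ x = fun i : Fin n => if (i : ℕ) < ℓ then 1 + x i else x i := by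
  set b : Fin n → ZMod 2 := fun i => f (sdsPartial f (i : ℕ) x) with hbdef
  have hFx : ∀ j : Fin n, sdsMap f x j = b j := by
    intro j
    rw [sdsMap_eq_partial, sdsPartial_apply f x n le_rfl j, if_pos j.isLt]
  have hb : ∀ ℓ : Fin n, b ℓ = f (fun m => if (m : ℕ) < (ℓ : ℕ) then b m else x m) := by
    intro ℓ
    show f (sdsPartial f (ℓ : ℕ) x) = _
    congr 1
    funext m
    rw [sdsPartial_apply f x (ℓ : ℕ) (le_of_lt ℓ.isLt) m]
  have hc : ∀ j : Fin n, f (sdsPartial f (j : ℕ) (sdsMap f x)) = x j := by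
    intro j
    have h := sdsPartial_apply f (sdsMap f x) n le_rfl j
    rw [if_pos j.isLt] at h
    rw [← h, ← sdsMap_eq_partial, h2]
  have hx : ∀ ℓ : Fin n, x ℓ = f (fun m => if (m : ℕ) < (ℓ : ℕ) then x m else b m) := by
    intro ℓ
    rw [← hc ℓ]
    congr 1
    funext m
    rw [sdsPartial_apply f (sdsMap f x) (ℓ : ℕ) (le_of_lt ℓ.isLt) m]
    by_cases h : (m : ℕ) < (ℓ : ℕ)
    · rw [if_pos h, if_pos h, hc m]
    · rw [if_neg h, if_neg h, hFx m]
  have hne : b ≠ x := by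
    intro h
    apply h1
    funext j
    rw [hFx j, h]
  have hflip : ∀ k : Fin n, b k = 1 + x k := by
    intro k
    have := flip_all f x b hb hx hne k
    revert this
    generalize b k = a
    generalize x k = c
    revert a c
    decide
  intro ℓ hℓ
  funext i
  rw [sdsPartial_apply f x ℓ hℓ i]
  by_cases h : (i : ℕ) < ℓ
  · rw [if_pos h, if_pos h]
    exact hflip i
  · rw [if_neg h, if_neg h]
end
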